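/- arXiv:1012.5556 — 16 statements merged into one kernel-verified Lean document; each statement's English description precedes it below -/
import Mathlib

section
/- Let (J,B) be a pseudo-Euclidean Jordan algebra over ℂ. Then: (1) the nucleus N(J) = {x ∈ J : (x,y,z) = (y,x,z) = (y,z,x) = 0 for all y,z ∈ J} equals the center Z(J) = {x ∈ J : (x,y,z) = 0 for all y,z ∈ J}; (2) the B-orthogonal complement of Z(J) equals the associator subspace (J,J,J) = span{(x,y,z) : x,y,z ∈ J}; (3) the B-orthogonal complement of the annulator Ann(J) = {x ∈ J : xJ = 0} equals J² = span{xy : x,y ∈ J}. -/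
/-!
The associativity of `B` moves an associator across the form:
`B((x,y,z),w) = -B(x,(y,z,w))`, and likewise `B(xy,w) = B(x,yw)`. Hence the center is exactly
the `B`-orthogonal complement of `(J,J,J)` and the annihilator that of `J²`; taking complements
again, which is involutive for a nondegenerate form in finite dimension, gives (2) and (3).
For (1), commutativity alone expresses `(y,x,z)` and `(y,z,x)` through associators with `x` in
the first slot.
-/

/-- The associator (x,y,z) = (xy)z − x(yz) of a (not necessarily associative) algebra. -/
def jassoc {J : Type*} [AddCommGroup J] [Module ℂ J]
    (mul : J →ₗ[ℂ] J →ₗ[ℂ] J) (x y z : J) : J :=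
  mul (mul x y) z - mul x (mul y z)

namespace LinearMap.BilinForm

theorem mem_orthogonal_span_iff {R M : Type*} [CommRing R] [AddCommGroup M] [Module R M]
    {B : LinearMap.BilinForm R M} {G : Set M} {x : M} :
    x ∈ B.orthogonal (Submodule.span R G) ↔ ∀ g ∈ G, B g x = 0 := by
  refine ⟨fun hx g hg => hx g (Submodule.subset_span hg), fun hx g hg => ?_⟩
  exact (Submodule.span_le (p := LinearMap.ker (B.flip x)) |>.mpr hx) hg

variable {K V : Type*} [Field K] [AddCommGroup V] [Module K V] {B : LinearMap.BilinForm K V}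

theorem setOf_forall_orthogonal_eq [FiniteDimensional K V] (hB : B.IsSymm)
    (hnd : B.Nondegenerate) (W : Submodule K V) :
    {x : V | ∀ z ∈ (B.orthogonal W : Set V), B x z = 0} = W := by
  conv_rhs => rw [← orthogonal_orthogonal hnd hB.isRefl W]
  ext x
  exact forall₂_congr fun z _ => by rw [hB.eq]

end LinearMap.BilinForm

open LinearMap.BilinForm

theorem setOf_mul_eq_zero_eq_orthogonal {R V : Type*} [CommRing R] [AddCommGroup V] [Module R V]
    (mul : V →ₗ[R] V →ₗ[R] V) {B : LinearMap.BilinForm R V}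
    (hB : B.IsSymm) (hnd : B.Nondegenerate) (hBassoc : ∀ x y z, B (mul x y) z = B x (mul y z)) :
    {x : V | ∀ y, mul x y = 0} = B.orthogonal (Submodule.span R {a | ∃ x y, mul x y = a}) := by
  ext x
  simp only [Set.mem_ofPred_eq, SetLike.mem_coe, mem_orthogonal_span_iff]
  constructor
  · rintro hx _ ⟨a, b, rfl⟩
    rw [hB.eq, ← hBassoc, hx, map_zero, LinearMap.zero_apply]
  · intro hx y
    refine hnd.1 _ fun w => ?_
    rw [hBassoc, hB.eq]
    exact hx _ ⟨y, w, rfl⟩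

section Associator

variable {J : Type*} [AddCommGroup J] [Module ℂ J] {mul : J →ₗ[ℂ] J →ₗ[ℂ] J}

theorem jassoc_swap_left_right (hcomm : ∀ x y : J, mul x y = mul y x) (x y z : J) :
    jassoc mul z y x = -jassoc mul x y z := by
  rw [jassoc, jassoc, neg_sub, hcomm (mul z y) x, hcomm z y, hcomm z (mul y x), hcomm y x]

theorem jassoc_swap_left_middle (hcomm : ∀ x y : J, mul x y = mul y x) (x y z : J) :
    jassoc mul y x z = jassoc mul x y z - jassoc mul x z y := by
  simp only [jassoc, hcomm y x, hcomm y (mul x z), hcomm z y]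
  abel

theorem bilin_jassoc_left_eq_neg (B : J →ₗ[ℂ] J →ₗ[ℂ] ℂ)
    (hBassoc : ∀ x y z, B (mul x y) z = B x (mul y z)) (x y z w : J) :
    B (jassoc mul x y z) w = -B x (jassoc mul y z w) := by
  simp only [jassoc, map_sub, LinearMap.sub_apply, hBassoc]
  ring

theorem setOf_jassoc_eq_zero_eq_orthogonal {B : LinearMap.BilinForm ℂ J} (hB : B.IsSymm)
    (hnd : B.Nondegenerate) (hBassoc : ∀ x y z, B (mul x y) z = B x (mul y z)) :
    {x : J | ∀ y z, jassoc mul x y z = 0} =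
      B.orthogonal (Submodule.span ℂ {a | ∃ x y z, jassoc mul x y z = a}) := by
  ext x
  simp only [Set.mem_ofPred_eq, SetLike.mem_coe, mem_orthogonal_span_iff]
  constructor
  · rintro hx _ ⟨a, b, c, rfl⟩
    rw [hB.eq, ← neg_eq_zero, ← bilin_jassoc_left_eq_neg B hBassoc, hx, map_zero,
      LinearMap.zero_apply]
  · intro hx y z
    refine hnd.1 _ fun w => ?_
    rw [bilin_jassoc_left_eq_neg B hBassoc, hB.eq, hx _ ⟨y, z, w, rfl⟩, neg_zero]

end Associator

theorem stmt1_general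
    {J : Type*} [AddCommGroup J] [Module ℂ J] [FiniteDimensional ℂ J]
    (mul : J →ₗ[ℂ] J →ₗ[ℂ] J)
    (hcomm : ∀ x y : J, mul x y = mul y x)
    (B : J →ₗ[ℂ] J →ₗ[ℂ] ℂ)
    (hBsymm : ∀ x y : J, B x y = B y x)
    (hBnondeg : ∀ x : J, (∀ y : J, B x y = 0) → x = 0)
    (hBassoc : ∀ x y z : J, B (mul x y) z = B x (mul y z)) :
    ({x : J | ∀ y z : J, jassoc mul x y z = 0 ∧ jassoc mul y x z = 0 ∧ jassoc mul y z x = 0}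
        = {x : J | ∀ y z : J, jassoc mul x y z = 0}) ∧
    ({x : J | ∀ z ∈ {x : J | ∀ y z : J, jassoc mul x y z = 0}, B x z = 0}
        = (Submodule.span ℂ {a : J | ∃ x y z : J, jassoc mul x y z = a} : Set J)) ∧
    ({x : J | ∀ z ∈ {x : J | ∀ y : J, mul x y = 0}, B x z = 0}
        = (Submodule.span ℂ {a : J | ∃ x y : J, mul x y = a} : Set J)) := by
  have hB : LinearMap.BilinForm.IsSymm B := isSymm_def.mpr hBsymm
  have hnd : LinearMap.BilinForm.Nondegenerate B :=
    ⟨hBnondeg, fun x hx => hBnondeg x fun y => hBsymm x y ▸ hx y⟩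
  refine ⟨?_, ?_, ?_⟩
  · ext x
    refine ⟨fun hx y z => (hx y z).1, fun hx y z => ⟨hx y z, ?_, ?_⟩⟩
    · rw [jassoc_swap_left_middle hcomm, hx, hx, sub_zero]
    · rw [jassoc_swap_left_right hcomm, hx, neg_zero]
  · rw [setOf_jassoc_eq_zero_eq_orthogonal hB hnd hBassoc, setOf_forall_orthogonal_eq hB hnd]
  · rw [setOf_mul_eq_zero_eq_orthogonal mul hB hnd hBassoc, setOf_forall_orthogonal_eq hB hnd]

/-- In a pseudo-Euclidean Jordan algebra (J,B):
(1) the nucleus equals the center; (2) Z(J)⊥ = (J,J,J); (3) Ann(J)⊥ = J². -/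
theorem stmt1
    {J : Type*} [AddCommGroup J] [Module ℂ J] [FiniteDimensional ℂ J]
    (mul : J →ₗ[ℂ] J →ₗ[ℂ] J)
    (hcomm : ∀ x y : J, mul x y = mul y x)
    (hjordan : ∀ x y : J, mul (mul x y) (mul x x) = mul x (mul y (mul x x)))
    (B : J →ₗ[ℂ] J →ₗ[ℂ] ℂ)
    (hBsymm : ∀ x y : J, B x y = B y x)
    (hBnondeg : ∀ x : J, (∀ y : J, B x y = 0) → x = 0)
    (hBassoc : ∀ x y z : J, B (mul x y) z = B x (mul y z)) :
    ({x : J | ∀ y z : J, jassoc mul x y z = 0 ∧ jassoc mul y x z = 0 ∧ jassoc mul y z x = 0}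
        = {x : J | ∀ y z : J, jassoc mul x y z = 0}) ∧
    ({x : J | ∀ z ∈ {x : J | ∀ y z : J, jassoc mul x y z = 0}, B x z = 0}
        = (Submodule.span ℂ {a : J | ∃ x y z : J, jassoc mul x y z = a} : Set J)) ∧
    ({x : J | ∀ z ∈ {x : J | ∀ y : J, mul x y = 0}, B x z = 0}
        = (Submodule.span ℂ {a : J | ∃ x y : J, mul x y = a} : Set J)) :=
  stmt1_general mul hcomm B hBsymm hBnondeg hBassoc
end

section
/- Let (J,B) be a pseudo-Euclidean Jordan algebra over ℂ whose product is not identically zero (non-Abelian). Then there exist subspaces z and l of J such that J = z ⊕ l, B(z,l) = 0, the restrictions of B to z × z and to l × l are non-degenerate, z ⊆ Ann(J) (so z·J = 0), l is an ideal of J, l ≠ {0}, and l is reduced, i.e. its annulator Ann(l) = {x ∈ l : x·l = 0} is totally isotropic for B (B vanishes on Ann(l) × Ann(l)). -/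
/-!
Let `A = ker mul` be the annulator and `A ⊓ A^⊥` the radical of `B` on it. A complement `Z` of
this radical inside `A` is a nondegenerate subspace, so `J = Z ⊕ Z^⊥` orthogonally, and by
associativity of `B` every product lies in `L = Z^⊥`, which is therefore a nonzero ideal. An element
annihilating `L` also annihilates `Z ⊆ A`, so it lies in `A ⊓ Z^⊥`; this subspace is orthogonal to
all of `A`, which makes `Ann(L)` totally isotropic.
-/

namespace LinearMap.BilinForm

variable {K V : Type*} [Field K] [AddCommGroup V] [Module K V] {B : LinearMap.BilinForm K V}

theorem disjoint_orthogonal_iff (hB : B.IsRefl) {W : Submodule K V} :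
    Disjoint W (B.orthogonal W) ↔ ∀ x ∈ W, (∀ y ∈ W, B x y = 0) → x = 0 := by
  rw [Submodule.disjoint_def]
  exact forall₂_congr fun x _ =>
    imp_congr_left ⟨fun h y hy => hB _ _ (h y hy), fun h y hy => hB _ _ (h y hy)⟩

section ComplementOfRadical

variable {W N : Submodule K V}

theorem inf_orthogonal_le_orthogonal (hB : B.IsRefl) (hsup : W ⊓ B.orthogonal W ⊔ N = W) :
    W ⊓ B.orthogonal N ≤ B.orthogonal W := by
  rintro x ⟨hxW, hxN⟩ y hy
  rw [← hsup] at hy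
  obtain ⟨r, hr, n, hn, rfl⟩ := Submodule.mem_sup.1 hy
  change B (r + n) x = 0
  rw [map_add, LinearMap.add_apply, hB _ _ (hr.2 x hxW), hxN n hn, add_zero]

theorem disjoint_orthogonal_of_sup_eq (hB : B.IsRefl)
    (hdisj : Disjoint (W ⊓ B.orthogonal W) N) (hsup : W ⊓ B.orthogonal W ⊔ N = W) :
    Disjoint N (B.orthogonal N) := by
  have hNW : N ≤ W := hsup ▸ le_sup_right
  refine Submodule.disjoint_def.2 fun x hxN hxperp =>
    Submodule.disjoint_def.1 hdisj x ⟨hNW hxN, ?_⟩ hxN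
  exact inf_orthogonal_le_orthogonal hB hsup ⟨hNW hxN, hxperp⟩

end ComplementOfRadical

end LinearMap.BilinForm

section Annulator

open LinearMap

variable {R M : Type*} [CommRing R] [AddCommGroup M] [Module R M] {mul : M →ₗ[R] M →ₗ[R] M}

theorem mul_mem_orthogonal_ker {B : LinearMap.BilinForm R M}
    (hBassoc : ∀ x y z : M, B (mul x y) z = B x (mul y z)) (x y : M) :
    mul x y ∈ B.orthogonal (ker mul) := fun n hn => by
  change B n (mul x y) = 0
  rw [← hBassoc, mem_ker.1 hn, LinearMap.zero_apply, map_zero, LinearMap.zero_apply]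

theorem mem_ker_of_forall_mul_eq_zero (hcomm : ∀ x y : M, mul x y = mul y x)
    {Z L : Submodule R M} (hZ : Z ≤ ker mul) (hZL : Codisjoint Z L) ⦃x : M⦄
    (hx : ∀ y ∈ L, mul x y = 0) : x ∈ ker mul := by
  rw [mem_ker, ← ker_eq_top, eq_top_iff, ← hZL.eq_top]
  exact sup_le (fun z hz => by rw [mem_ker, hcomm, mem_ker.1 (hZ hz), LinearMap.zero_apply]) hx

end Annulator

open LinearMap LinearMap.BilinForm

theorem stmt2_general
    {J : Type*} [AddCommGroup J] [Module ℂ J] [FiniteDimensional ℂ J]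
    (mul : J →ₗ[ℂ] J →ₗ[ℂ] J)
    (hcomm : ∀ x y : J, mul x y = mul y x)
    (B : J →ₗ[ℂ] J →ₗ[ℂ] ℂ)
    (hBsymm : ∀ x y : J, B x y = B y x)
    (hBnondeg : ∀ x : J, (∀ y : J, B x y = 0) → x = 0)
    (hBassoc : ∀ x y z : J, B (mul x y) z = B x (mul y z))
    (hnonab : ∃ x y : J, mul x y ≠ 0) :
    ∃ Z L : Submodule ℂ J,
      IsCompl Z L ∧
      (∀ x ∈ Z, ∀ y ∈ L, B x y = 0) ∧
      (∀ x ∈ Z, (∀ y ∈ Z, B x y = 0) → x = 0) ∧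
      (∀ x ∈ L, (∀ y ∈ L, B x y = 0) → x = 0) ∧
      (∀ x ∈ Z, ∀ y : J, mul x y = 0) ∧
      (∀ x ∈ L, ∀ y : J, mul y x ∈ L) ∧
      L ≠ ⊥ ∧
      (∀ x ∈ L, (∀ y ∈ L, mul x y = 0) →
        ∀ x' ∈ L, (∀ y ∈ L, mul x' y = 0) → B x x' = 0) := by
  have hrefl : B.IsRefl := (isSymm_def.2 hBsymm).isRefl
  have hnondeg : B.Nondegenerate := ⟨hBnondeg, fun y hy => hBnondeg y fun x => hBsymm y x ▸ hy x⟩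
  obtain ⟨Z, hdisj, hsup⟩ :=
    IsModularLattice.exists_disjoint_and_sup_eq
      (inf_le_left : ker mul ⊓ orthogonal B (ker mul) ≤ ker mul)
  have hZ : Z ≤ ker mul := hsup ▸ le_sup_right
  have hcompl : IsCompl Z (orthogonal B Z) :=
    (isCompl_orthogonal_iff_disjoint hrefl).2 (disjoint_orthogonal_of_sup_eq hrefl hdisj hsup)
  have hLdisj : Disjoint (orthogonal B Z) (orthogonal B (orthogonal B Z)) := by
    rw [orthogonal_orthogonal hnondeg hrefl]
    exact hcompl.disjoint.symm
  have hprod (x y : J) : mul x y ∈ orthogonal B Z :=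
    orthogonal_le hZ (mul_mem_orthogonal_ker hBassoc x y)
  refine ⟨Z, orthogonal B Z, hcompl, fun x hx y hy => hy x hx,
    (disjoint_orthogonal_iff hrefl).1 hcompl.disjoint, (disjoint_orthogonal_iff hrefl).1 hLdisj,
    fun x hx => LinearMap.congr_fun (hZ hx), fun x _ y => hprod y x, ?_, ?_⟩
  · obtain ⟨x, y, hxy⟩ := hnonab
    exact fun hbot => hxy ((Submodule.eq_bot_iff _).1 hbot _ (hprod x y))
  · intro x _ hx x' hx'L hx'
    have hker := mem_ker_of_forall_mul_eq_zero hcomm hZ hcompl.codisjoint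
    exact inf_orthogonal_le_orthogonal hrefl hsup ⟨hker hx', hx'L⟩ x (hker hx)

/-- A non-Abelian pseudo-Euclidean Jordan algebra decomposes as an
orthogonal direct sum J = z ⊕ l with z contained in the annulator and l a nonzero
reduced (non-degenerate) ideal. -/
theorem stmt2
    {J : Type*} [AddCommGroup J] [Module ℂ J] [FiniteDimensional ℂ J]
    (mul : J →ₗ[ℂ] J →ₗ[ℂ] J)
    (hcomm : ∀ x y : J, mul x y = mul y x)
    (hjordan : ∀ x y : J, mul (mul x y) (mul x x) = mul x (mul y (mul x x)))
    (B : J →ₗ[ℂ] J →ₗ[ℂ] ℂ)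
    (hBsymm : ∀ x y : J, B x y = B y x)
    (hBnondeg : ∀ x : J, (∀ y : J, B x y = 0) → x = 0)
    (hBassoc : ∀ x y z : J, B (mul x y) z = B x (mul y z))
    (hnonab : ∃ x y : J, mul x y ≠ 0) :
    ∃ Z L : Submodule ℂ J,
      IsCompl Z L ∧
      (∀ x ∈ Z, ∀ y ∈ L, B x y = 0) ∧
      (∀ x ∈ Z, (∀ y ∈ Z, B x y = 0) → x = 0) ∧
      (∀ x ∈ L, (∀ y ∈ L, B x y = 0) → x = 0) ∧
      (∀ x ∈ Z, ∀ y : J, mul x y = 0) ∧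
      (∀ x ∈ L, ∀ y : J, mul y x ∈ L) ∧
      L ≠ ⊥ ∧
      (∀ x ∈ L, (∀ y ∈ L, mul x y = 0) →
        ∀ x' ∈ L, (∀ y ∈ L, mul x' y = 0) → B x x' = 0) :=
  stmt2_general mul hcomm B hBsymm hBnondeg hBassoc hnonab
end

section
/- Let (q,B_q) be a complex quadratic vector space and C a nonzero B_q-symmetric endomorphism of q. On J = q ⊕ ℂx₁ ⊕ ℂy₁ define the commutative bilinear product (x + λx₁ + μy₁) ⋆ (y + λ'x₁ + μ'y₁) = μC(y) + μ'C(x) + B_q(C(x),y)·x₁ for all x,y ∈ q and λ,μ,λ',μ' ∈ ℂ. Then ⋆ satisfies the Jordan identity (a⋆b)⋆(a⋆a) = a⋆(b⋆(a⋆a)) for all a,b ∈ J if and only if C³ = 0. -/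
/-- The nilpotent double extension J = q ⊕ ℂx₁ ⊕ ℂy₁ of a quadratic
vector space (q,B_q) by a nonzero symmetric map C satisfies the Jordan identity
if and only if C³ = 0.  An element x + λx₁ + μy₁ is encoded as (x, λ, μ). -/
theorem stmt3
    {q : Type*} [AddCommGroup q] [Module ℂ q] [FiniteDimensional ℂ q]
    (Bq : q →ₗ[ℂ] q →ₗ[ℂ] ℂ)
    (hBsymm : ∀ x y : q, Bq x y = Bq y x)
    (hBnondeg : ∀ x : q, (∀ y : q, Bq x y = 0) → x = 0)
    (C : q →ₗ[ℂ] q) (hC0 : C ≠ 0)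
    (hCsym : ∀ x y : q, Bq (C x) y = Bq x (C y))
    (star : q × ℂ × ℂ → q × ℂ × ℂ → q × ℂ × ℂ)
    (hstar : ∀ (x y : q) (lam mu lam' mu' : ℂ),
      star (x, lam, mu) (y, lam', mu') =
        (mu • C y + mu' • C x, Bq (C x) y, 0)) :
    (∀ a b : q × ℂ × ℂ, star (star a b) (star a a) = star a (star b (star a a))) ↔
      C ∘ₗ C ∘ₗ C = 0 := by
  constructor
  · intro H
    ext x
    have h := H (x, 0, 1) (0, 0, 1)
    simp only [hstar, map_zero, map_add, map_smul, smul_zero, zero_add, add_zero,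
      one_smul, zero_smul, smul_add, Prod.mk.injEq] at h
    obtain ⟨h1, -⟩ := h
    simp only [LinearMap.comp_apply, LinearMap.zero_apply]
    rw [← two_smul ℂ] at h1
    exact (smul_eq_zero.mp h1.symm).resolve_left two_ne_zero
  · intro h a b
    obtain ⟨x, lam, mu⟩ := a
    obtain ⟨y, lam', mu'⟩ := b
    have h3 : ∀ z : q, C (C (C z)) = 0 := by
      intro z
      have := congrArg (fun f => f z) h
      simpa using this
    have hb : ∀ z w : q, Bq (C (C z)) (C w) = 0 := by
      intro z w
      rw [hCsym, hCsym, h3, map_zero]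
    have hc : ∀ z w : q, Bq (C z) (C (C w)) = 0 := by
      intro z w
      rw [hCsym, h3, map_zero]
    simp only [hstar, map_add, map_smul, map_zero, smul_zero, add_zero, zero_add,
      zero_smul, smul_add, smul_smul, zero_mul, h3, hb, hc, LinearMap.add_apply,
      LinearMap.smul_apply, smul_eq_mul, mul_zero, Prod.mk.injEq, and_true, true_and]
end

section
/- Let (q,B_q) be a complex quadratic vector space and C a nonzero B_q-symmetric endomorphism of q. On J = q ⊕ ℂx₁ ⊕ ℂy₁ define the commutative bilinear product (x + λx₁ + μy₁) ⋆ (y + λ'x₁ + μ'y₁) = μC(y) + μ'C(x) + B_q(C(x),y)·x₁ + (λμ' + λ'μ)·x₁ + μμ'·y₁ for all x,y ∈ q and λ,μ,λ',μ' ∈ ℂ. Then ⋆ satisfies the Jordan identity (a⋆b)⋆(a⋆a) = a⋆(b⋆(a⋆a)) for all a,b ∈ J if and only if 3C² = 2C³ + C. Moreover, in that case the bilinear form B = B_q + B_t, where B_t(x₁,x₁) = B_t(y₁,y₁) = 0 and B_t(x₁,y₁) = 1, is symmetric, non-degenerate, and associative for ⋆: B(a⋆b, c) = B(a, b⋆c)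 for all a,b,c ∈ J. -/
/-- The diagonalizable double extension J = q ⊕ ℂx₁ ⊕ ℂy₁ of a quadratic
vector space (q,B_q) by a nonzero symmetric map C satisfies the Jordan identity if and
only if 3C² = 2C³ + C; and in that case the form B = B_q + B_t is symmetric,
non-degenerate and associative.  An element x + λx₁ + μy₁ is encoded as (x, λ, μ). -/
theorem stmt4
    {q : Type*} [AddCommGroup q] [Module ℂ q] [FiniteDimensional ℂ q]
    (Bq : q →ₗ[ℂ] q →ₗ[ℂ] ℂ)
    (hBsymm : ∀ x y : q, Bq x y = Bq y x)
    (hBnondeg : ∀ x : q, (∀ y : q, Bq x y = 0) → x = 0)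
    (C : q →ₗ[ℂ] q) (hC0 : C ≠ 0)
    (hCsym : ∀ x y : q, Bq (C x) y = Bq x (C y))
    (star : q × ℂ × ℂ → q × ℂ × ℂ → q × ℂ × ℂ)
    (hstar : ∀ (x y : q) (lam mu lam' mu' : ℂ),
      star (x, lam, mu) (y, lam', mu') =
        (mu • C y + mu' • C x, Bq (C x) y + (lam * mu' + lam' * mu), mu * mu'))
    (Bext : q × ℂ × ℂ → q × ℂ × ℂ → ℂ)
    (hBext : ∀ a b : q × ℂ × ℂ,
      Bext a b = Bq a.1 b.1 + a.2.1 * b.2.2 + b.2.1 * a.2.2) :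
    ((∀ a b : q × ℂ × ℂ, star (star a b) (star a a) = star a (star b (star a a))) ↔
      (3 : ℂ) • (C ∘ₗ C) = (2 : ℂ) • (C ∘ₗ C ∘ₗ C) + C) ∧
    ((∀ a b : q × ℂ × ℂ, star (star a b) (star a a) = star a (star b (star a a))) →
      (∀ a b : q × ℂ × ℂ, Bext a b = Bext b a) ∧
      (∀ a : q × ℂ × ℂ, (∀ b : q × ℂ × ℂ, Bext a b = 0) → a = 0) ∧
      (∀ a b c : q × ℂ × ℂ, Bext (star a b) c = Bext a (star b c))) := by
  have hs1 : ∀ u v : q, Bq u (C v) = Bq v (C u) := fun u v => by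
    rw [← hCsym, hBsymm]
  have hs2 : ∀ u v : q, Bq u (C (C v)) = Bq v (C (C u)) := fun u v => by
    rw [← hCsym, ← hCsym, hBsymm]
  constructor
  · constructor
    · intro h
      ext x
      have := congrArg Prod.fst (h (x, 0, 1) (0, 0, 1))
      simp only [hstar] at this
      simp only [hstar, map_zero, map_add, map_smul, one_smul, smul_zero, zero_add, add_zero,
        mul_one, one_mul, mul_zero, zero_mul] at this
      simp only [LinearMap.smul_apply, LinearMap.add_apply, LinearMap.coe_comp,
        Function.comp_apply]
      rw [show (3:ℂ) • C (C x) = C (C x) + C (C x) + C (C x) by module, this]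
      module
    · intro hcond
      have hkey : ∀ v, (3:ℂ) • C (C v) = (2:ℂ) • C (C (C v)) + C v := by
        intro v
        simpa using congrFun (congrArg DFunLike.coe hcond) v
      have hbq : ∀ u v : q, 3 * Bq u (C (C v)) = 2 * Bq u (C (C (C v))) + Bq u (C v) := by
        intro u v
        simpa [smul_eq_mul] using congrArg (Bq u) (hkey v)
      rintro ⟨x, lam, mu⟩ ⟨y, lam', mu'⟩
      simp only [hstar]
      refine Prod.ext ?_ (Prod.ext ?_ ?_)
      · simp only [map_add, map_smul, smul_add, smul_smul]
        linear_combination (norm := module) (mu^2 * mu') • hkey x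
      · simp only [map_add, map_smul, LinearMap.add_apply, LinearMap.smul_apply,
          LinearMap.map_smul, smul_eq_mul, hCsym]
        linear_combination mu^2 * hs1 x y - mu^2 * hs2 x y - mu^2 * hbq y x
      · ring
  · intro _
    refine ⟨?_, ?_, ?_⟩
    · intro a b
      rw [hBext, hBext, hBsymm]
      ring
    · rintro ⟨x, lam, mu⟩ ha
      have hx : x = 0 := by
        apply hBnondeg
        intro y
        have h := ha (y, 0, 0)
        rw [hBext] at h
        simpa using h
      have hlam : lam = 0 := by
        have h := ha (0, 0, 1)
        rw [hBext] at h
        simpa using h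
      have hmu : mu = 0 := by
        have h := ha (0, 1, 0)
        rw [hBext] at h
        simpa using h
      simp [hx, hlam, hmu]
    · rintro ⟨x, lam, mu⟩ ⟨y, lam', mu'⟩ ⟨z, lam'', nu⟩
      simp only [hstar, hBext, map_add, map_smul, LinearMap.add_apply, LinearMap.smul_apply,
        smul_eq_mul, hCsym]
      ring
end

section
/- Let (q,B_q) be a complex quadratic vector space and let C and C' be invertible B_q-symmetric endomorphisms of q satisfying 3C² = 2C³ + C and 3C'² = 2C'³ + C'. Let J (resp. J') be q ⊕ ℂx₁ ⊕ ℂy₁ with the diagonalizable double extension product determined by C (resp. C'), namely y₁⋆y₁ = y₁, y₁⋆x₁ = x₁, y₁⋆x = C(x), x⋆y = B_q(C(x),y)·x₁, x₁⋆x = x₁⋆x₁ = 0 for x,y ∈ q (and analogously for C'). Then there exists an algebra isomorphism (a bijective ℂ-linear map A with A(a⋆b) = A(a)⋆'A(b)) between J and J' if and only if there exists an isometry P of (q,B_q) such that C' = P C P⁻¹. Moreover, in this case J and J' are i-isomorphic, i.e. isomorphic via a map that also preserves the forms B = B_q + B_t and B' = B_q + B_t, where B_t(x₁,x₁) = B_t(y₁,y₁)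 = 0 and B_t(x₁,y₁) = 1. -/
/-!
The third coordinate `μ` is the only nonzero character of a double extension: `x₁` and every
`x ∈ q` square into `K x₁`, which squares to zero, so a character kills them, and `y₁ ⋆ y₁ = y₁`.
Hence an algebra isomorphism `A` preserves `μ`. Applying `A` to `x ⋆ y = B(C x, y) x₁` and to
`y₁ ⋆ x = C x` then shows that `A x₁ = c x₁` with `c ≠ 0` and that the `q`-component `F` of `A`
on `q` satisfies `F C = C' F` and `B(F x, F y) = c B(x, y)`; a square root of `c` rescales `F`
into the required isometry. Conversely, `P ⊕ id` is an isomorphism preserving both forms.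
-/

section DoubleExtension

variable {K q : Type*} [Field K] [AddCommGroup q] [Module K q]

/-- `(x, λ, μ)` stands for `x + λ x₁ + μ y₁`. -/
def doubleExtMul (B : q →ₗ[K] q →ₗ[K] K) (C : q →ₗ[K] q) (a b : q × K × K) : q × K × K :=
  (a.2.2 • C b.1 + b.2.2 • C a.1, B (C a.1) b.1 + (a.2.1 * b.2.2 + b.2.1 * a.2.2), a.2.2 * b.2.2)

def doubleExtForm (B : q →ₗ[K] q →ₗ[K] K) (a b : q × K × K) : K :=
  B a.1 b.1 + a.2.1 * b.2.2 + b.2.1 * a.2.2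

section Character

variable {B : q →ₗ[K] q →ₗ[K] K} {C : q →ₗ[K] q}

theorem character_doubleExtMul_apply_of_snd_snd_eq_zero {φ : q × K × K →ₗ[K] K}
    (hφ : ∀ a b, φ (doubleExtMul B C a b) = φ a * φ b) (x : q) (lam : K) :
    φ (x, lam, 0) = 0 := by
  have hx₁ : φ (0, 1, 0) = 0 := by
    have h := hφ (0, 1, 0) (0, 1, 0)
    have hsq : doubleExtMul B C (0, 1, 0) (0, 1, 0) = 0 := by ext <;> simp [doubleExtMul]
    rw [hsq, map_zero] at h
    exact mul_self_eq_zero.mp h.symm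
  have hx : φ (x, 0, 0) = 0 := by
    have h := hφ (x, 0, 0) (x, 0, 0)
    have hsq : doubleExtMul B C (x, 0, 0) (x, 0, 0) = B (C x) x • (0, 1, 0) := by
      ext <;> simp [doubleExtMul]
    rw [hsq, map_smul, hx₁, smul_zero] at h
    exact mul_self_eq_zero.mp h.symm
  have hsplit : ((x, lam, 0) : q × K × K) = (x, 0, 0) + lam • (0, 1, 0) := by ext <;> simp
  rw [hsplit, map_add, map_smul, hx, hx₁, smul_zero, add_zero]

theorem character_doubleExtMul_eq_zero_or {φ : q × K × K →ₗ[K] K}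
    (hφ : ∀ a b, φ (doubleExtMul B C a b) = φ a * φ b) :
    φ = 0 ∨ ∀ a, φ a = a.2.2 := by
  have hy₁ : φ (0, 0, 1) = 0 ∨ φ (0, 0, 1) = 1 := by
    have h := hφ (0, 0, 1) (0, 0, 1)
    have hsq : doubleExtMul B C (0, 0, 1) (0, 0, 1) = (0, 0, 1) := by ext <;> simp [doubleExtMul]
    rw [hsq] at h
    rcases mul_eq_zero.mp (show φ (0, 0, 1) * (φ (0, 0, 1) - 1) = 0 by linear_combination -h)
      with h0 | h1
    · exact .inl h0
    · exact .inr (sub_eq_zero.mp h1)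
  have hφa : ∀ a : q × K × K, φ a = a.2.2 * φ (0, 0, 1) := fun a => by
    have hsplit : a = (a.1, a.2.1, 0) + a.2.2 • (0, 0, 1) := by ext <;> simp
    rw [hsplit, map_add, map_smul, character_doubleExtMul_apply_of_snd_snd_eq_zero hφ]
    simp
  rcases hy₁ with h0 | h1
  · exact .inl (LinearMap.ext fun a => by simp [hφa a, h0])
  · exact .inr fun a => by simp [hφa a, h1]

theorem snd_snd_map_of_map_doubleExtMul {C' : q →ₗ[K] q} {A : (q × K × K) ≃ₗ[K] q × K × K}
    (hA : ∀ a b, A (doubleExtMul B C a b) = doubleExtMul B C' (A a) (A b)) (a : q × K × K) :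
    (A a).2.2 = a.2.2 := by
  let φ : q × K × K →ₗ[K] K :=
    LinearMap.snd K K K ∘ₗ LinearMap.snd K q (K × K) ∘ₗ A.toLinearMap
  have hφ : ∀ a b, φ (doubleExtMul B C a b) = φ a * φ b := fun a b => by
    change (A _).2.2 = (A a).2.2 * (A b).2.2
    rw [hA]
    rfl
  rcases character_doubleExtMul_eq_zero_or hφ with h0 | hπ
  · have h := LinearMap.congr_fun h0 (A.symm (0, 0, 1))
    simp [φ] at h
  · exact hπ a

end Character

section Isometry

variable {B : q →ₗ[K] q →ₗ[K] K} {C C' : q →ₗ[K] q}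

theorem exists_conformal_of_map_doubleExtMul (hB : ∀ x, (∀ y, B x y = 0) → x = 0)
    (hC : Function.Surjective C) {A : (q × K × K) ≃ₗ[K] q × K × K}
    (hA : ∀ a b, A (doubleExtMul B C a b) = doubleExtMul B C' (A a) (A b)) :
    ∃ c ≠ 0, ∃ F : q →ₗ[K] q,
      (∀ x y, B (F x) (F y) = c * B x y) ∧ ∀ x, F (C x) = C' (F x) := by
  have hπ := snd_snd_map_of_map_doubleExtMul hA
  set z := A (0, 1, 0) with hz
  let F : q →ₗ[K] q := LinearMap.fst K q (K × K) ∘ₗ A.toLinearMap ∘ₗ LinearMap.inl K q (K × K)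
  have hF : ∀ x, F x = (A (x, 0, 0)).1 := fun x => rfl
  have hxy : ∀ x y, B (C x) y • z = doubleExtMul B C' (A (x, 0, 0)) (A (y, 0, 0)) := by
    intro x y
    rw [← hA, hz, ← map_smul]
    congr 1
    ext <;> simp [doubleExtMul]
  have hz₁ : z.1 = 0 := by
    have hBz : ∀ x y, B (C x) y • z.1 = 0 := fun x y => by
      simpa [doubleExtMul, hπ] using congrArg Prod.fst (hxy x y)
    by_contra hne
    obtain ⟨x, hx⟩ := hC z.1
    refine hne (hx ▸ hB _ fun y => ?_)
    exact (smul_eq_zero.mp (hBz x y)).resolve_right hne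
  have hc : z.2.1 ≠ 0 := by
    intro h0
    have : z = 0 := Prod.ext hz₁ (Prod.ext h0 (by simp [hz, hπ]))
    simp [hz] at this
  have hpair : ∀ x y, B (C' (F x)) (F y) = z.2.1 * B (C x) y := fun x y => by
    have h := congrArg (fun p => p.2.1) (hxy x y)
    simp only [doubleExtMul, hπ, Prod.smul_snd, Prod.smul_fst, smul_eq_mul, mul_zero,
      add_zero] at h
    rw [hF, hF, ← h, mul_comm]
  have hFC : ∀ x, F (C x) = C' (F x) := fun x => by
    have h := congrArg Prod.fst (hA (0, 0, 1) (x, 0, 0))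
    have hy₁x : doubleExtMul B C (0, 0, 1) (x, 0, 0) = (C x, 0, 0) := by
      ext <;> simp [doubleExtMul]
    rw [hF, hF]
    simpa [hy₁x, doubleExtMul, hπ] using h
  refine ⟨z.2.1, hc, F, fun x y => ?_, hFC⟩
  obtain ⟨x', rfl⟩ := hC x
  rw [hFC, hpair]

theorem injective_of_isometry (hB : ∀ x, (∀ y, B x y = 0) → x = 0) {G : q →ₗ[K] q}
    (hG : ∀ x y, B (G x) (G y) = B x y) : Function.Injective G := by
  refine (injective_iff_map_eq_zero G).mpr fun x hx => hB x fun y => ?_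
  rw [← hG, hx, map_zero, LinearMap.zero_apply]

theorem exists_isometry_of_conformal [IsAlgClosed K] [FiniteDimensional K q]
    (hB : ∀ x, (∀ y, B x y = 0) → x = 0) {c : K} (hc : c ≠ 0) {F : q →ₗ[K] q}
    (hF : ∀ x y, B (F x) (F y) = c * B x y) (hFC : ∀ x, F (C x) = C' (F x)) :
    ∃ P : q ≃ₗ[K] q, (∀ x y, B (P x) (P y) = B x y) ∧ ∀ x, C' x = P (C (P.symm x)) := by
  obtain ⟨e, rfl⟩ := IsAlgClosed.exists_eq_mul_self c
  have he : e ≠ 0 := by rintro rfl; simp at hc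
  let G : q →ₗ[K] q := e⁻¹ • F
  have hG : ∀ x y, B (G x) (G y) = B x y := fun x y => by
    simp only [G, LinearMap.smul_apply, map_smul, smul_eq_mul, hF]
    field_simp
  have hGinj := injective_of_isometry hB hG
  let P := LinearEquiv.ofBijective G ⟨hGinj, LinearMap.injective_iff_surjective.mp hGinj⟩
  have hPC : ∀ x, C' (P x) = P (C x) := fun x => by
    change C' (e⁻¹ • F x) = e⁻¹ • F (C x)
    rw [map_smul, hFC]
  refine ⟨P, hG, fun x => ?_⟩
  rw [← hPC, P.apply_symm_apply]

end Isometry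

section Converse

variable {B : q →ₗ[K] q →ₗ[K] K} {C C' : q →ₗ[K] q} {P : q ≃ₗ[K] q}

theorem map_doubleExtMul_prodCongr (hP : ∀ x y, B (P x) (P y) = B x y)
    (hPC : ∀ x, C' x = P (C (P.symm x))) (a b : q × K × K) :
    P.prodCongr (.refl K (K × K)) (doubleExtMul B C a b) =
      doubleExtMul B C' (P.prodCongr (.refl K (K × K)) a) (P.prodCongr (.refl K (K × K)) b) := by
  simp [doubleExtMul, hPC, hP]

theorem doubleExtForm_prodCongr (hP : ∀ x y, B (P x) (P y) = B x y) (a b : q × K × K) :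
    doubleExtForm B (P.prodCongr (.refl K (K × K)) a) (P.prodCongr (.refl K (K × K)) b) =
      doubleExtForm B a b := by
  simp [doubleExtForm, hP]

end Converse

end DoubleExtension

theorem stmt5_general
    {q : Type*} [AddCommGroup q] [Module ℂ q] [FiniteDimensional ℂ q]
    (Bq : q →ₗ[ℂ] q →ₗ[ℂ] ℂ)
    (hBnondeg : ∀ x : q, (∀ y : q, Bq x y = 0) → x = 0)
    (C C' : q →ₗ[ℂ] q)
    (hCinv : Function.Bijective C)
    (star star' : q × ℂ × ℂ → q × ℂ × ℂ → q × ℂ × ℂ)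
    (hstar : ∀ (x y : q) (lam mu lam' mu' : ℂ),
      star (x, lam, mu) (y, lam', mu') =
        (mu • C y + mu' • C x, Bq (C x) y + (lam * mu' + lam' * mu), mu * mu'))
    (hstar' : ∀ (x y : q) (lam mu lam' mu' : ℂ),
      star' (x, lam, mu) (y, lam', mu') =
        (mu • C' y + mu' • C' x, Bq (C' x) y + (lam * mu' + lam' * mu), mu * mu'))
    (Bext : q × ℂ × ℂ → q × ℂ × ℂ → ℂ)
    (hBext : ∀ a b : q × ℂ × ℂ,
      Bext a b = Bq a.1 b.1 + a.2.1 * b.2.2 + b.2.1 * a.2.2) :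
    ((∃ A : (q × ℂ × ℂ) ≃ₗ[ℂ] q × ℂ × ℂ,
        ∀ a b : q × ℂ × ℂ, A (star a b) = star' (A a) (A b)) ↔
      (∃ P : q ≃ₗ[ℂ] q, (∀ x y : q, Bq (P x) (P y) = Bq x y) ∧
        ∀ x : q, C' x = P (C (P.symm x)))) ∧
    ((∃ A : (q × ℂ × ℂ) ≃ₗ[ℂ] q × ℂ × ℂ,
        ∀ a b : q × ℂ × ℂ, A (star a b) = star' (A a) (A b)) →
      ∃ A : (q × ℂ × ℂ) ≃ₗ[ℂ] q × ℂ × ℂ,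
        (∀ a b : q × ℂ × ℂ, A (star a b) = star' (A a) (A b)) ∧
        ∀ a b : q × ℂ × ℂ, Bext (A a) (A b) = Bext a b) := by
  obtain rfl : star = doubleExtMul Bq C := funext₂ fun a b => hstar a.1 b.1 _ _ _ _
  obtain rfl : star' = doubleExtMul Bq C' := funext₂ fun a b => hstar' a.1 b.1 _ _ _ _
  obtain rfl : Bext = doubleExtForm Bq := funext₂ hBext
  have isometric_iso : ∀ P : q ≃ₗ[ℂ] q, (∀ x y, Bq (P x) (P y) = Bq x y) →
      (∀ x, C' x = P (C (P.symm x))) →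
      ∃ A : (q × ℂ × ℂ) ≃ₗ[ℂ] q × ℂ × ℂ,
        (∀ a b, A (doubleExtMul Bq C a b) = doubleExtMul Bq C' (A a) (A b)) ∧
        ∀ a b, doubleExtForm Bq (A a) (A b) = doubleExtForm Bq a b := fun P hP hPC =>
    ⟨_, map_doubleExtMul_prodCongr hP hPC, doubleExtForm_prodCongr hP⟩
  have isometry_of_iso : (∃ A : (q × ℂ × ℂ) ≃ₗ[ℂ] q × ℂ × ℂ,
        ∀ a b, A (doubleExtMul Bq C a b) = doubleExtMul Bq C' (A a) (A b)) →
      ∃ P : q ≃ₗ[ℂ] q, (∀ x y, Bq (P x) (P y) = Bq x y) ∧ ∀ x, C' x = P (C (P.symm x)) := by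
    rintro ⟨A, hA⟩
    obtain ⟨c, hc, F, hF, hFC⟩ := exists_conformal_of_map_doubleExtMul hBnondeg hCinv.2 hA
    exact exists_isometry_of_conformal hBnondeg hc hF hFC
  refine ⟨⟨isometry_of_iso, fun ⟨P, hP, hPC⟩ => ?_⟩, fun h => ?_⟩
  · obtain ⟨A, hA, -⟩ := isometric_iso P hP hPC
    exact ⟨A, hA⟩
  · obtain ⟨P, hP, hPC⟩ := isometry_of_iso h
    exact isometric_iso P hP hPC

/-- Two diagonalizable double extensions of (q,B_q) by invertible symmetric
maps C, C' (with 3C² = 2C³ + C, 3C'² = 2C'³ + C') are isomorphic as algebras iff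
C' = P C P⁻¹ for some isometry P of (q,B_q); and in that case they are i-isomorphic.
An element x + λx₁ + μy₁ is encoded as (x, λ, μ). -/
theorem stmt5
    {q : Type*} [AddCommGroup q] [Module ℂ q] [FiniteDimensional ℂ q]
    (Bq : q →ₗ[ℂ] q →ₗ[ℂ] ℂ)
    (hBsymm : ∀ x y : q, Bq x y = Bq y x)
    (hBnondeg : ∀ x : q, (∀ y : q, Bq x y = 0) → x = 0)
    (C C' : q →ₗ[ℂ] q)
    (hCinv : Function.Bijective C) (hC'inv : Function.Bijective C')
    (hCsym : ∀ x y : q, Bq (C x) y = Bq x (C y))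
    (hC'sym : ∀ x y : q, Bq (C' x) y = Bq x (C' y))
    (hC : (3 : ℂ) • (C ∘ₗ C) = (2 : ℂ) • (C ∘ₗ C ∘ₗ C) + C)
    (hC' : (3 : ℂ) • (C' ∘ₗ C') = (2 : ℂ) • (C' ∘ₗ C' ∘ₗ C') + C')
    (star star' : q × ℂ × ℂ → q × ℂ × ℂ → q × ℂ × ℂ)
    (hstar : ∀ (x y : q) (lam mu lam' mu' : ℂ),
      star (x, lam, mu) (y, lam', mu') =
        (mu • C y + mu' • C x, Bq (C x) y + (lam * mu' + lam' * mu), mu * mu'))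
    (hstar' : ∀ (x y : q) (lam mu lam' mu' : ℂ),
      star' (x, lam, mu) (y, lam', mu') =
        (mu • C' y + mu' • C' x, Bq (C' x) y + (lam * mu' + lam' * mu), mu * mu'))
    (Bext : q × ℂ × ℂ → q × ℂ × ℂ → ℂ)
    (hBext : ∀ a b : q × ℂ × ℂ,
      Bext a b = Bq a.1 b.1 + a.2.1 * b.2.2 + b.2.1 * a.2.2) :
    ((∃ A : (q × ℂ × ℂ) ≃ₗ[ℂ] q × ℂ × ℂ,
        ∀ a b : q × ℂ × ℂ, A (star a b) = star' (A a) (A b)) ↔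
      (∃ P : q ≃ₗ[ℂ] q, (∀ x y : q, Bq (P x) (P y) = Bq x y) ∧
        ∀ x : q, C' x = P (C (P.symm x)))) ∧
    ((∃ A : (q × ℂ × ℂ) ≃ₗ[ℂ] q × ℂ × ℂ,
        ∀ a b : q × ℂ × ℂ, A (star a b) = star' (A a) (A b)) →
      ∃ A : (q × ℂ × ℂ) ≃ₗ[ℂ] q × ℂ × ℂ,
        (∀ a b : q × ℂ × ℂ, A (star a b) = star' (A a) (A b)) ∧
        ∀ a b : q × ℂ × ℂ, Bext (A a) (A b) = Bext a b) :=
  stmt5_general Bq hBnondeg C C' hCinv star star' hstar hstar' Bext hBext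
end

section
/- Let (J,B) be a reduced 2-step nilpotent pseudo-Euclidean Jordan algebra over ℂ. Then Ann(J) = J², where J² = span{xy : x,y ∈ J}, and dim(J²) = (1/2)·dim(J). -/
/-!
Associativity and symmetry of `B` give `B (y * z) x = B (x * y) z`, so by nondegeneracy the
annihilator of `J` is exactly the orthogonal of `J²`. Two-step nilpotency puts `J²` inside the
annihilator, i.e. `J²` is totally isotropic, while reducedness says its orthogonal is totally
isotropic too. Taking orthogonals once more, `J²` is Lagrangian: it equals its own orthogonal,
and in finite dimension this forces `2 · dim J² = dim J`.
-/

open Module Submodule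

namespace LinearMap.BilinForm

section CommRing

variable {R M : Type*} [CommRing R] [AddCommGroup M] [Module R M] {B : LinearMap.BilinForm R M}

theorem mem_orthogonal_span_iff_s7 {s : Set M} {x : M} :
    x ∈ B.orthogonal (span R s) ↔ ∀ a ∈ s, B a x = 0 := by
  refine ⟨fun hx a ha => hx a (subset_span ha), fun hx => ?_⟩
  have : span R s ≤ LinearMap.ker (B.flip x) := span_le.mpr hx
  exact fun a ha => this ha

theorem orthogonal_span_products_eq_ker (mul : M →ₗ[R] M →ₗ[R] M) (hB : B.IsSymm)
    (hBmul : ∀ x y z, B (mul x y) z = B x (mul y z)) (hBsep : LinearMap.SeparatingLeft B) :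
    B.orthogonal (span R {a | ∃ x y, mul x y = a}) = LinearMap.ker mul := by
  ext x
  have key (y z : M) : B (mul y z) x = B (mul x y) z := by
    rw [hB.eq, hBmul]
  rw [mem_orthogonal_span_iff_s7, LinearMap.mem_ker, LinearMap.ext_iff]
  constructor
  · intro h y
    rw [LinearMap.zero_apply]
    exact hBsep _ fun z => key y z ▸ h _ ⟨y, z, rfl⟩
  · rintro h _ ⟨y, z, rfl⟩
    rw [key, h y, LinearMap.zero_apply, LinearMap.map_zero, LinearMap.zero_apply]

end CommRing

section Field

variable {K V : Type*} [Field K] [AddCommGroup V] [Module K V] [FiniteDimensional K V]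
  {B : LinearMap.BilinForm K V} {W : Submodule K V}

theorem orthogonal_eq_self_of_le_orthogonal (hB : B.Nondegenerate) (hB₀ : B.IsRefl)
    (hW : W ≤ B.orthogonal W) (hW' : B.orthogonal W ≤ B.orthogonal (B.orthogonal W)) :
    B.orthogonal W = W :=
  le_antisymm (by rwa [orthogonal_orthogonal hB hB₀] at hW') hW

theorem two_mul_finrank_eq_of_orthogonal_eq_self (hB : B.Nondegenerate)
    (hW : B.orthogonal W = W) : 2 * finrank K W = finrank K V := by
  have hdim := finrank_orthogonal hB W
  rw [hW] at hdim
  have := W.finrank_le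
  omega

end Field

end LinearMap.BilinForm

open LinearMap.BilinForm in
theorem stmt7_general
    {J : Type*} [AddCommGroup J] [Module ℂ J] [FiniteDimensional ℂ J]
    (mul : J →ₗ[ℂ] J →ₗ[ℂ] J)
    (h2step : ∀ x y z : J, mul (mul x y) z = 0)
    (B : J →ₗ[ℂ] J →ₗ[ℂ] ℂ)
    (hBsymm : ∀ x y : J, B x y = B y x)
    (hBnondeg : ∀ x : J, (∀ y : J, B x y = 0) → x = 0)
    (hBassoc : ∀ x y z : J, B (mul x y) z = B x (mul y z))
    (hred : ∀ x : J, (∀ y : J, mul x y = 0) →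
      ∀ x' : J, (∀ y : J, mul x' y = 0) → B x x' = 0) :
    ({x : J | ∀ y : J, mul x y = 0}
        = (Submodule.span ℂ {a : J | ∃ x y : J, mul x y = a} : Set J)) ∧
    2 * Module.finrank ℂ (Submodule.span ℂ {a : J | ∃ x y : J, mul x y = a})
        = Module.finrank ℂ J := by
  have hB : IsSymm B := ⟨hBsymm⟩
  have hBnd : Nondegenerate B := hB.isRefl.nondegenerate_iff_separatingLeft.mpr hBnondeg
  set W := Submodule.span ℂ {a : J | ∃ x y : J, mul x y = a}
  have hWperp : orthogonal B W = LinearMap.ker mul :=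
    orthogonal_span_products_eq_ker mul hB hBassoc hBnondeg
  have hW_le_ker : W ≤ LinearMap.ker mul :=
    Submodule.span_le.mpr fun _ ⟨x, y, hxy⟩ => LinearMap.ext (hxy ▸ h2step x y)
  have hker_isotropic : LinearMap.ker mul ≤ orthogonal B (LinearMap.ker mul) :=
    fun x hx x' hx' => hred x' (LinearMap.congr_fun hx') x (LinearMap.congr_fun hx)
  have hself : orthogonal B W = W :=
    orthogonal_eq_self_of_le_orthogonal hBnd hB.isRefl (hWperp ▸ hW_le_ker)
      (hWperp ▸ hker_isotropic)
  refine ⟨?_, two_mul_finrank_eq_of_orthogonal_eq_self hBnd hself⟩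
  rw [← hself, hWperp]
  ext x
  exact (LinearMap.ext_iff (f := mul x) (g := 0)).symm

/-- In a reduced 2-step nilpotent pseudo-Euclidean Jordan algebra (J,B),
the annulator equals J² and dim(J²) = (1/2)·dim(J). -/
theorem stmt7
    {J : Type*} [AddCommGroup J] [Module ℂ J] [FiniteDimensional ℂ J] [Nontrivial J]
    (mul : J →ₗ[ℂ] J →ₗ[ℂ] J)
    (hcomm : ∀ x y : J, mul x y = mul y x)
    (h2step : ∀ x y z : J, mul (mul x y) z = 0)
    (B : J →ₗ[ℂ] J →ₗ[ℂ] ℂ)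
    (hBsymm : ∀ x y : J, B x y = B y x)
    (hBnondeg : ∀ x : J, (∀ y : J, B x y = 0) → x = 0)
    (hBassoc : ∀ x y z : J, B (mul x y) z = B x (mul y z))
    (hred : ∀ x : J, (∀ y : J, mul x y = 0) →
      ∀ x' : J, (∀ y : J, mul x' y = 0) → B x x' = 0) :
    ({x : J | ∀ y : J, mul x y = 0}
        = (Submodule.span ℂ {a : J | ∃ x y : J, mul x y = a} : Set J)) ∧
    2 * Module.finrank ℂ (Submodule.span ℂ {a : J | ∃ x y : J, mul x y = a})
        = Module.finrank ℂ J :=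
  stmt7_general mul h2step B hBsymm hBnondeg hBassoc hred
end

section
/- Let V be a nonzero finite-dimensional complex vector space and θ : V × V → V* a symmetric bilinear map that is cyclic (θ(x,y)(z) = θ(y,z)(x) for all x,y,z ∈ V) and non-degenerate (θ(x,·) = 0 implies x = 0). On J = V ⊕ V* define the product (x+f)(y+g) = θ(x,y) and the bilinear form B(x+f, y+g) = f(y) + g(x). Then the product is commutative and satisfies (ab)c = 0 for all a,b,c ∈ J, the form B is symmetric, non-degenerate and associative (B(ab,c) = B(a,bc)), and the annulator Ann(J) = {a ∈ J : aJ = 0} equals V*, which is totally isotropic for B; hence J is a reduced 2-step nilpotent pseudo-Euclidean Jordan algebra, called the T*-extension of V by θ. -/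
/-- The T*-extension J = V ⊕ V* of a nonzero finite-dimensional vector
space V by a cyclic symmetric non-degenerate bilinear map θ : V × V → V*, with product
(x+f)(y+g) = θ(x,y) and form B(x+f,y+g) = f(y) + g(x), is a reduced 2-step nilpotent
pseudo-Euclidean Jordan algebra whose annulator is V*, which is totally isotropic. -/
theorem stmt8
    {V : Type*} [AddCommGroup V] [Module ℂ V] [FiniteDimensional ℂ V] [Nontrivial V]
    (θ : V →ₗ[ℂ] V →ₗ[ℂ] Module.Dual ℂ V)
    (hsym : ∀ x y : V, θ x y = θ y x)
    (hcyc : ∀ x y z : V, θ x y z = θ y z x)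
    (hnd : ∀ x : V, (∀ y : V, θ x y = 0) → x = 0)
    (prod : V × Module.Dual ℂ V → V × Module.Dual ℂ V → V × Module.Dual ℂ V)
    (hprod : ∀ a b : V × Module.Dual ℂ V, prod a b = (0, θ a.1 b.1))
    (B : V × Module.Dual ℂ V → V × Module.Dual ℂ V → ℂ)
    (hB : ∀ a b : V × Module.Dual ℂ V, B a b = a.2 b.1 + b.2 a.1) :
    (∀ a b : V × Module.Dual ℂ V, prod a b = prod b a) ∧
    (∀ a b c : V × Module.Dual ℂ V, prod (prod a b) c = 0) ∧
    (∀ a b : V × Module.Dual ℂ V, B a b = B b a) ∧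
    (∀ a : V × Module.Dual ℂ V, (∀ b : V × Module.Dual ℂ V, B a b = 0) → a = 0) ∧
    (∀ a b c : V × Module.Dual ℂ V, B (prod a b) c = B a (prod b c)) ∧
    ({a : V × Module.Dual ℂ V | ∀ b : V × Module.Dual ℂ V, prod a b = 0}
        = {a : V × Module.Dual ℂ V | a.1 = 0}) ∧
    (∀ a b : V × Module.Dual ℂ V,
      (∀ c, prod a c = 0) → (∀ c, prod b c = 0) → B a b = 0) := by
  refine ⟨?_, ?_, ?_, ?_, ?_, ?_, ?_⟩
  · intro a b; rw [hprod, hprod, hsym]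
  · intro a b c
    rw [hprod, hprod]
    simp [Prod.ext_iff]
  · intro a b; rw [hB, hB]; ring
  · intro a ha
    have h1 : a.2 = 0 := by
      ext y
      have := ha (y, 0)
      simp [hB] at this
      simpa using this
    have h2 : a.1 = 0 := by
      rw [← Module.forall_dual_apply_eq_zero_iff ℂ]
      intro g
      have := ha (0, g)
      simp [hB, h1] at this
      simpa using this
    exact Prod.ext h2 h1
  · intro a b c
    rw [hprod, hprod, hB, hB]
    simp [hcyc a.1 b.1 c.1]
  · ext a
    simp only [Set.mem_setOf_eq]
    constructor
    · intro h
      apply hnd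
      intro y
      have := h (y, 0)
      rw [hprod] at this
      simpa [Prod.ext_iff] using this
    · intro h b
      rw [hprod, h]
      simp [Prod.ext_iff]
  · intro a b ha hb
    have h1 : a.1 = 0 := by
      apply hnd; intro y
      have := ha (y, 0); rw [hprod] at this
      simpa [Prod.ext_iff] using this
    have h2 : b.1 = 0 := by
      apply hnd; intro y
      have := hb (y, 0); rw [hprod] at this
      simpa [Prod.ext_iff] using this
    rw [hB, h1, h2]; simp
end

section
/- Let V be a finite-dimensional complex vector space and θ₁, θ₂ : V × V → V* two cyclic symmetric non-degenerate bilinear maps, and let J₁ and J₂ be the corresponding T*-extensions of V, i.e. V ⊕ V* with products (x+f)(y+g) = θᵢ(x,y) and common bilinear form B(x+f, y+g) = f(y) + g(x). Then there exists an i-isomorphism between J₁ and J₂ (a bijective ℂ-linear map A with A(ab) = A(a)A(b) and B(A(a),A(b)) = B(a,b) for all a,b) if and only if there exists a linear automorphism A₁ of V such that θ₁(x,y) = θ₂(A₁(x),A₁(y)) ∘ A₁ for all x,y ∈ V. -/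
/-!
An i-isomorphism `A` of T*-extensions maps the ideal `0 × V*` into itself: for `f ∈ V*` every
product `A(0, f) · A b = A((0, f) · b)` vanishes, so non-degeneracy of `θ₂` forces
`(A (0, f)).1 = 0`. Hence `A` induces a surjective, and by finiteness bijective, endomorphism
`A₁` of `V`, and invariance of the form gives `(A (0, g)).2 ∘ A₁ = g`; applied to
`A (0, θ₁ x y) = (0, θ₂ (A₁ x) (A₁ y))` this is the required identity. Conversely
`(x, f) ↦ (A₁ x, f ∘ A₁⁻¹)` is an i-isomorphism.
-/

namespace TStarExtension

variable {R V : Type*} [CommRing R] [AddCommGroup V] [Module R V]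

def mul (θ : V →ₗ[R] V →ₗ[R] Module.Dual R V) (a b : V × Module.Dual R V) :
    V × Module.Dual R V :=
  (0, θ a.1 b.1)

def form (a b : V × Module.Dual R V) : R :=
  a.2 b.1 + b.2 a.1

section FromBase

variable {θ₁ θ₂ : V →ₗ[R] V →ₗ[R] Module.Dual R V} (A₁ : V ≃ₗ[R] V)

theorem prodCongr_dualMap_mul (h : ∀ x y, θ₁ x y = (θ₂ (A₁ x) (A₁ y)).comp (A₁ : V →ₗ[R] V))
    (a b : V × Module.Dual R V) :
    A₁.prodCongr A₁.symm.dualMap (mul θ₁ a b) =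
      mul θ₂ (A₁.prodCongr A₁.symm.dualMap a) (A₁.prodCongr A₁.symm.dualMap b) := by
  ext z
  · simp [mul]
  · simp [mul, h a.1 b.1, LinearEquiv.dualMap_apply]

theorem form_prodCongr_dualMap (a b : V × Module.Dual R V) :
    form (A₁.prodCongr A₁.symm.dualMap a) (A₁.prodCongr A₁.symm.dualMap b) = form a b := by
  simp [form, LinearEquiv.dualMap_apply]

end FromBase

section ToBase

variable (A : (V × Module.Dual R V) ≃ₗ[R] V × Module.Dual R V)

def baseMap : V →ₗ[R] V :=
  LinearMap.fst R V (Module.Dual R V) ∘ₗ A.toLinearMap ∘ₗ LinearMap.inl R V (Module.Dual R V)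

theorem baseMap_apply (x : V) : baseMap A x = (A (x, 0)).1 := rfl

variable {A}

theorem fst_map_zero_dual {θ₁ θ₂ : V →ₗ[R] V →ₗ[R] Module.Dual R V}
    (hnd₂ : ∀ x, (∀ y, θ₂ x y = 0) → x = 0)
    (hA : ∀ a b, A (mul θ₁ a b) = mul θ₂ (A a) (A b)) (f : Module.Dual R V) :
    (A (0, f)).1 = 0 := by
  refine hnd₂ _ fun y => ?_
  have h := congrArg Prod.snd (hA (0, f) (A.symm (y, 0)))
  simpa [mul, Prod.mk_zero_zero] using h.symm

theorem fst_map_eq_baseMap (h0 : ∀ f : Module.Dual R V, (A (0, f)).1 = 0)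
    (a : V × Module.Dual R V) : (A a).1 = baseMap A a.1 := by
  calc (A a).1 = (A ((a.1, 0) + (0, a.2))).1 := by simp
    _ = baseMap A a.1 := by rw [map_add, Prod.fst_add, h0, add_zero, baseMap_apply]

theorem baseMap_surjective (h0 : ∀ f : Module.Dual R V, (A (0, f)).1 = 0) :
    Function.Surjective (baseMap A) := fun v =>
  ⟨(A.symm (v, 0)).1, by rw [← fst_map_eq_baseMap h0, A.apply_symm_apply]⟩

theorem snd_map_zero_dual_baseMap (h0 : ∀ f : Module.Dual R V, (A (0, f)).1 = 0)
    (hform : ∀ a b, form (A a) (A b) = form a b) (g : Module.Dual R V) (z : V) :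
    (A (0, g)).2 (baseMap A z) = g z := by
  simpa [form, h0, baseMap_apply] using hform (0, g) (z, 0)

end ToBase

theorem exists_isometric_mul_equiv_iff [Module.Finite R V]
    {θ₁ θ₂ : V →ₗ[R] V →ₗ[R] Module.Dual R V} (hnd₂ : ∀ x, (∀ y, θ₂ x y = 0) → x = 0) :
    (∃ A : (V × Module.Dual R V) ≃ₗ[R] V × Module.Dual R V,
      (∀ a b, A (mul θ₁ a b) = mul θ₂ (A a) (A b)) ∧ ∀ a b, form (A a) (A b) = form a b) ↔
    ∃ A₁ : V ≃ₗ[R] V, ∀ x y, θ₁ x y = (θ₂ (A₁ x) (A₁ y)).comp (A₁ : V →ₗ[R] V) := by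
  constructor
  · rintro ⟨A, hA, hform⟩
    have h0 := fst_map_zero_dual hnd₂ hA
    refine ⟨.ofBijective (baseMap A)
      (OrzechProperty.bijective_of_surjective_endomorphism _ (baseMap_surjective h0)), ?_⟩
    intro x y
    have hxy : A (0, θ₁ x y) = (0, θ₂ (baseMap A x) (baseMap A y)) := hA (x, 0) (y, 0)
    ext z
    simpa [hxy] using (snd_map_zero_dual_baseMap h0 hform (θ₁ x y) z).symm
  · rintro ⟨A₁, h⟩
    exact ⟨_, prodCongr_dualMap_mul A₁ h, form_prodCongr_dualMap A₁⟩

end TStarExtension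

theorem stmt9_general
    {V : Type*} [AddCommGroup V] [Module ℂ V] [FiniteDimensional ℂ V]
    (θ₁ θ₂ : V →ₗ[ℂ] V →ₗ[ℂ] Module.Dual ℂ V)
    (hnd₂ : ∀ x : V, (∀ y : V, θ₂ x y = 0) → x = 0)
    (prod₁ prod₂ : V × Module.Dual ℂ V → V × Module.Dual ℂ V → V × Module.Dual ℂ V)
    (hprod₁ : ∀ a b : V × Module.Dual ℂ V, prod₁ a b = (0, θ₁ a.1 b.1))
    (hprod₂ : ∀ a b : V × Module.Dual ℂ V, prod₂ a b = (0, θ₂ a.1 b.1))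
    (B : V × Module.Dual ℂ V → V × Module.Dual ℂ V → ℂ)
    (hB : ∀ a b : V × Module.Dual ℂ V, B a b = a.2 b.1 + b.2 a.1) :
    (∃ A : (V × Module.Dual ℂ V) ≃ₗ[ℂ] V × Module.Dual ℂ V,
      (∀ a b : V × Module.Dual ℂ V, A (prod₁ a b) = prod₂ (A a) (A b)) ∧
      (∀ a b : V × Module.Dual ℂ V, B (A a) (A b) = B a b)) ↔
    (∃ A₁ : V ≃ₗ[ℂ] V, ∀ x y : V,
      θ₁ x y = (θ₂ (A₁ x) (A₁ y)).comp (A₁ : V →ₗ[ℂ] V)) := by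
  obtain rfl : prod₁ = TStarExtension.mul θ₁ := funext₂ hprod₁
  obtain rfl : prod₂ = TStarExtension.mul θ₂ := funext₂ hprod₂
  obtain rfl : B = TStarExtension.form := funext₂ hB
  exact TStarExtension.exists_isometric_mul_equiv_iff hnd₂

/-- Two T*-extensions of V by θ₁ and θ₂ are i-isomorphic if and only if
there is a linear automorphism A₁ of V with θ₁(x,y) = θ₂(A₁x, A₁y) ∘ A₁ for all x,y. -/
theorem stmt9
    {V : Type*} [AddCommGroup V] [Module ℂ V] [FiniteDimensional ℂ V]
    (θ₁ θ₂ : V →ₗ[ℂ] V →ₗ[ℂ] Module.Dual ℂ V)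
    (hsym₁ : ∀ x y : V, θ₁ x y = θ₁ y x)
    (hcyc₁ : ∀ x y z : V, θ₁ x y z = θ₁ y z x)
    (hnd₁ : ∀ x : V, (∀ y : V, θ₁ x y = 0) → x = 0)
    (hsym₂ : ∀ x y : V, θ₂ x y = θ₂ y x)
    (hcyc₂ : ∀ x y z : V, θ₂ x y z = θ₂ y z x)
    (hnd₂ : ∀ x : V, (∀ y : V, θ₂ x y = 0) → x = 0)
    (prod₁ prod₂ : V × Module.Dual ℂ V → V × Module.Dual ℂ V → V × Module.Dual ℂ V)
    (hprod₁ : ∀ a b : V × Module.Dual ℂ V, prod₁ a b = (0, θ₁ a.1 b.1))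
    (hprod₂ : ∀ a b : V × Module.Dual ℂ V, prod₂ a b = (0, θ₂ a.1 b.1))
    (B : V × Module.Dual ℂ V → V × Module.Dual ℂ V → ℂ)
    (hB : ∀ a b : V × Module.Dual ℂ V, B a b = a.2 b.1 + b.2 a.1) :
    (∃ A : (V × Module.Dual ℂ V) ≃ₗ[ℂ] V × Module.Dual ℂ V,
      (∀ a b : V × Module.Dual ℂ V, A (prod₁ a b) = prod₂ (A a) (A b)) ∧
      (∀ a b : V × Module.Dual ℂ V, B (A a) (A b) = B a b)) ↔
    (∃ A₁ : V ≃ₗ[ℂ] V, ∀ x y : V,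
      θ₁ x y = (θ₂ (A₁ x) (A₁ y)).comp (A₁ : V →ₗ[ℂ] V)) :=
  stmt9_general θ₁ θ₂ hnd₂ prod₁ prod₂ hprod₁ hprod₂ B hB
end

section
/- Let N be a complex vector space with an anticommutative bilinear product, i.e. xy = −yx for all x,y ∈ N. Then N is a Novikov algebra (the left-symmetric identity (xy)z − x(yz) = (yx)z − y(xz) and the right-commutativity identity (xy)z = (xz)y hold) if and only if the product makes N a 2-step nilpotent Lie algebra, i.e. the Jacobi identity (xy)z + (yz)x + (zx)y = 0 holds and (xy)z = 0 for all x,y,z ∈ N. -/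
/-- An anticommutative algebra is a Novikov algebra if and only if its
product makes it a 2-step nilpotent Lie algebra. -/
theorem stmt11
    {N : Type*} [AddCommGroup N] [Module ℂ N]
    (mul : N →ₗ[ℂ] N →ₗ[ℂ] N)
    (hanti : ∀ x y : N, mul x y = -mul y x) :
    ((∀ x y z : N,
        mul (mul x y) z - mul x (mul y z) = mul (mul y x) z - mul y (mul x z)) ∧
     (∀ x y z : N, mul (mul x y) z = mul (mul x z) y)) ↔
    ((∀ x y z : N, mul (mul x y) z + mul (mul y z) x + mul (mul z x) y = 0) ∧
     (∀ x y z : N, mul (mul x y) z = 0)) := by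
  constructor
  · rintro ⟨h1, h2⟩
    have key : ∀ x y z : N, mul (mul y z) x = -mul (mul x y) z := by
      intro x y z
      have e := h1 x y z
      rw [hanti y x, map_neg, LinearMap.neg_apply, hanti x (mul y z),
        hanti y (mul x z), ← h2 x y z] at e
      rw [sub_neg_eq_add, sub_neg_eq_add, neg_add_cancel] at e
      exact eq_neg_of_add_eq_zero_right e
    have hz : ∀ x y z : N, mul (mul x y) z = 0 := by
      intro x y z
      have h : mul (mul x y) z = -mul (mul x y) z :=
        calc mul (mul x y) z = -mul (mul z x) y := key z x y
          _ = -(-mul (mul y z) x) := by rw [key y z x]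
          _ = -(-(-mul (mul x y) z)) := by rw [key x y z]
          _ = -mul (mul x y) z := by rw [neg_neg]
      have h2' : (2 : ℂ) • mul (mul x y) z = 0 := by
        rw [two_smul]; nth_rewrite 2 [h]; abel
      rcases smul_eq_zero.mp h2' with h' | h'
      · norm_num at h'
      · exact h'
    refine ⟨fun x y z => ?_, hz⟩
    rw [hz, hz, hz]; abel
  · rintro ⟨hj, hz⟩
    constructor
    · intro x y z
      have hx : mul x (mul y z) = 0 := by rw [hanti x (mul y z), hz]; simp
      have hy : mul y (mul x z) = 0 := by rw [hanti y (mul x z), hz]; simp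
      rw [hz, hz, hx, hy]
    · intro x y z; rw [hz, hz]
end

section
/- Let N be a Novikov algebra over ℂ satisfying (x,x,x) = (xx)x − x(xx) = 0 for all x ∈ N. Then the commutative product x∘y := xy + yx satisfies the Jordan identity (x∘y)∘(x∘x) = x∘(y∘(x∘x)) for all x,y ∈ N; that is, N is Jordan-admissible. -/
/-!
Put `a = x x`. Expanding the Jordan defect `(x∘y)∘(x∘x) - x∘(y∘(x∘x))` of the
anticommutator and applying left symmetry at `(x,y,a)`, `(x,a,y)`, `(y,a,x)` and right
commutativity at `(y,x,a)` leaves exactly `2 (y (x,x,x) + (x,x,x) y)`, which vanishes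
when the cube associator `(x,x,x)` does.
-/

namespace NovikovAlgebra

variable {R M : Type*} [CommRing R] [AddCommGroup M] [Module R M]
  (mul : M →ₗ[R] M →ₗ[R] M)

def associator (x y z : M) : M := mul (mul x y) z - mul x (mul y z)

def anticommutator (x y : M) : M := mul x y + mul y x

theorem anticommutator_jordan_defect_eq
    (hlsym : ∀ x y z : M,
      mul (mul x y) z - mul x (mul y z) = mul (mul y x) z - mul y (mul x z))
    (hrcomm : ∀ x y z : M, mul (mul x y) z = mul (mul x z) y) (x y : M) :
    anticommutator mul (anticommutator mul x y) (anticommutator mul x x) -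
        anticommutator mul x (anticommutator mul y (anticommutator mul x x)) =
      (2 : R) • (mul y (associator mul x x x) + mul (associator mul x x x) y) := by
  simp only [anticommutator, associator, map_add, map_sub, LinearMap.add_apply,
    LinearMap.sub_apply]
  linear_combination (norm := module)
    (2 : R) • hlsym x y (mul x x) + (2 : R) • hlsym x (mul x x) y +
    (2 : R) • hlsym y (mul x x) x + (4 : R) • hrcomm y x (mul x x)

end NovikovAlgebra

open NovikovAlgebra

/-- A Novikov algebra with (x,x,x) = 0 for all x is Jordan-admissible:
the product x∘y = xy + yx satisfies the Jordan identity. -/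
theorem stmt13
    {N : Type*} [AddCommGroup N] [Module ℂ N]
    (mul : N →ₗ[ℂ] N →ₗ[ℂ] N)
    (hlsym : ∀ x y z : N,
      mul (mul x y) z - mul x (mul y z) = mul (mul y x) z - mul y (mul x z))
    (hrcomm : ∀ x y z : N, mul (mul x y) z = mul (mul x z) y)
    (hxxx : ∀ x : N, mul (mul x x) x - mul x (mul x x) = 0)
    (circ : N → N → N)
    (hcirc : ∀ x y : N, circ x y = mul x y + mul y x) :
    ∀ x y : N, circ (circ x y) (circ x x) = circ x (circ y (circ x x)) := by
  intro x y
  have hcirc_eq : circ = anticommutator mul := funext₂ hcirc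
  have hdefect := anticommutator_jordan_defect_eq mul hlsym hrcomm x y
  rw [show associator mul x x x = 0 from hxxx x] at hdefect
  simpa [hcirc_eq, sub_eq_zero] using hdefect
end

section
/- Let (N,B) be a symmetric Novikov algebra over ℂ with dim N = 6 that is non-commutative (there exist x,y ∈ N with xy ≠ yx). Then N is 2-step nilpotent: (xy)z = 0 for all x,y,z ∈ N. -/
/-!
Associativity and symmetry of `B` make left multiplications commute, so left-symmetry turns into
`(xy)z = (yx)z`: commutators annihilate from the left. Hence every commutator lies in `P ∩ P^⊥`,
where `P = span N·N`, and `B([x,y], z)` is an alternating trilinear form. If it is nonzero, the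
three commutators `[a,b], [b,w], [w,a]` with `B([a,b], w) ≠ 0` are linearly independent, so
`dim (P ∩ P^⊥) ≥ 3`. On the other hand, `(xy)z = 0` for all `x, y, z` means exactly that `P` is
isotropic, and for a non-isotropic `P` we have `dim (P ∩ P^⊥) < dim P` and
`dim (P ∩ P^⊥) ≤ dim P^⊥ = 6 - dim P`, forcing `dim (P ∩ P^⊥) ≤ 2`.
-/

open Module LinearMap.BilinForm

theorem two_mul_finrank_inf_orthogonal_lt {K V : Type*} [Field K] [AddCommGroup V] [Module K V]
    [FiniteDimensional K V] {B : LinearMap.BilinForm K V} (hB : B.Nondegenerate)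
    {W : Submodule K V} (hW : ¬ W ≤ B.orthogonal W) :
    2 * finrank K ↥(W ⊓ B.orthogonal W) < finrank K V := by
  have hlt : finrank K ↥(W ⊓ B.orthogonal W) < finrank K W :=
    Submodule.finrank_lt_finrank_of_lt (inf_lt_left.mpr hW)
  have hle : finrank K ↥(W ⊓ B.orthogonal W) ≤ finrank K ↥(B.orthogonal W) :=
    Submodule.finrank_mono inf_le_right
  have hW_le : finrank K W ≤ finrank K V := Submodule.finrank_le W
  rw [finrank_orthogonal hB] at hle
  omega

section SymmetricNovikov

variable {R N : Type*} [CommRing R] [AddCommGroup N] [Module R N]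
  {mul : N →ₗ[R] N →ₗ[R] N} {B : LinearMap.BilinForm R N}

variable (mul) in
def productSpan : Submodule R N :=
  Submodule.span R (Set.range fun p : N × N => mul p.1 p.2)

theorem mul_mem_productSpan (x y : N) : mul x y ∈ productSpan mul :=
  Submodule.subset_span ⟨(x, y), rfl⟩

theorem left_mul_comm (hrcomm : ∀ x y z : N, mul (mul x y) z = mul (mul x z) y)
    (hBsymm : ∀ x y : N, B x y = B y x) (hBsep : ∀ x : N, (∀ y : N, B x y = 0) → x = 0)
    (hBassoc : ∀ x y z : N, B (mul x y) z = B x (mul y z)) (x y z : N) :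
    mul x (mul y z) = mul y (mul x z) := by
  refine sub_eq_zero.mp (hBsep _ fun u => ?_)
  rw [map_sub, LinearMap.sub_apply, sub_eq_zero]
  calc B (mul x (mul y z)) u = B (mul (mul u x) y) z := by
        rw [hBsymm, hBassoc, hBassoc]
    _ = B (mul (mul u y) x) z := by rw [hrcomm]
    _ = B (mul y (mul x z)) u := by rw [hBassoc, hBassoc, ← hBsymm]

theorem commutator_mul_eq_zero
    (hlsym : ∀ x y z : N,
      mul (mul x y) z - mul x (mul y z) = mul (mul y x) z - mul y (mul x z))
    (hrcomm : ∀ x y z : N, mul (mul x y) z = mul (mul x z) y)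
    (hBsymm : ∀ x y : N, B x y = B y x) (hBsep : ∀ x : N, (∀ y : N, B x y = 0) → x = 0)
    (hBassoc : ∀ x y z : N, B (mul x y) z = B x (mul y z)) (x y z : N) :
    mul (mul x y - mul y x) z = 0 := by
  have h := hlsym x y z
  rw [left_mul_comm hrcomm hBsymm hBsep hBassoc x y z, sub_left_inj] at h
  rw [map_sub, LinearMap.sub_apply, h, sub_self]

theorem form_commutator_cyclic (hBsymm : ∀ x y : N, B x y = B y x)
    (hBassoc : ∀ x y z : N, B (mul x y) z = B x (mul y z)) (x y z : N) :
    B (mul x y - mul y x) z = B (mul y z - mul z y) x := by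
  have e₁ : B (mul x y) z = B (mul y z) x := by rw [hBassoc, hBsymm]
  have e₂ : B (mul z y) x = B (mul y x) z := by rw [hBassoc, hBsymm]
  simp only [map_sub, LinearMap.sub_apply, e₁, e₂]

theorem commutator_mem_inf_orthogonal (hBsymm : ∀ x y : N, B x y = B y x)
    (hBassoc : ∀ x y z : N, B (mul x y) z = B x (mul y z))
    (hann : ∀ x y z : N, mul (mul x y - mul y x) z = 0) (x y : N) :
    mul x y - mul y x ∈ productSpan mul ⊓ B.orthogonal (productSpan mul) := by
  refine ⟨sub_mem (mul_mem_productSpan x y) (mul_mem_productSpan y x), fun p hp => ?_⟩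
  induction hp using Submodule.span_induction with
  | mem _ hp =>
    obtain ⟨⟨u, v⟩, rfl⟩ := hp
    rw [hBsymm, ← hBassoc, hann, map_zero, LinearMap.zero_apply]
  | zero => simp
  | add _ _ _ _ h₁ h₂ => simp [h₁, h₂]
  | smul _ _ _ h => simp [h]

theorem mul_mul_eq_zero_of_le_orthogonal (hBsymm : ∀ x y : N, B x y = B y x)
    (hBsep : ∀ x : N, (∀ y : N, B x y = 0) → x = 0)
    (hBassoc : ∀ x y z : N, B (mul x y) z = B x (mul y z))
    (hP : productSpan mul ≤ B.orthogonal (productSpan mul)) (x y z : N) :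
    mul (mul x y) z = 0 :=
  hBsep _ fun w => by
    rw [hBassoc, hBsymm]
    exact hP (mul_mem_productSpan x y) _ (mul_mem_productSpan z w)

end SymmetricNovikov

section Field

variable {K N : Type*} [Field K] [AddCommGroup N] [Module K N]
  {mul : N →ₗ[K] N →ₗ[K] N} {B : LinearMap.BilinForm K N}

theorem linearIndependent_commutators (hBsymm : ∀ x y : N, B x y = B y x)
    (hBassoc : ∀ x y z : N, B (mul x y) z = B x (mul y z)) {a b w : N}
    (hw : B (mul a b - mul b a) w ≠ 0) :
    LinearIndependent K ![mul a b - mul b a, mul b w - mul w b, mul w a - mul a w] := by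
  have cyc := form_commutator_cyclic hBsymm hBassoc
  set c := B (mul a b - mul b a) w
  have hwa : B (mul b w - mul w b) a = c := by rw [cyc, cyc]
  have hab : B (mul w a - mul a w) b = c := by rw [cyc]
  have h₀ : ∀ u v : N, B (mul u v - mul v u) u = 0 := fun u v => by
    rw [cyc, cyc, sub_self, map_zero, LinearMap.zero_apply]
  have h₁ : ∀ u v : N, B (mul u v - mul v u) v = 0 := fun u v => by
    rw [cyc, sub_self, map_zero, LinearMap.zero_apply]
  rw [Fintype.linearIndependent_iff]
  intro g hg
  have key : ∀ u, g 0 * B (mul a b - mul b a) u + g 1 * B (mul b w - mul w b) u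
      + g 2 * B (mul w a - mul a w) u = 0 := fun u => by
    simpa [Fin.sum_univ_three] using congrArg (B · u) hg
  intro i
  fin_cases i
  · have h := key w
    rw [h₁ b w, h₀ w a, mul_zero, mul_zero, add_zero, add_zero] at h
    exact (mul_eq_zero.mp h).resolve_right hw
  · have h := key a
    rw [h₀ a b, hwa, h₁ w a, mul_zero, mul_zero, zero_add, add_zero] at h
    exact (mul_eq_zero.mp h).resolve_right hw
  · have h := key b
    rw [h₁ a b, h₀ b w, hab, mul_zero, mul_zero, zero_add, zero_add] at h
    exact (mul_eq_zero.mp h).resolve_right hw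

theorem three_le_finrank_inf_orthogonal [FiniteDimensional K N]
    (hBsymm : ∀ x y : N, B x y = B y x) (hBsep : ∀ x : N, (∀ y : N, B x y = 0) → x = 0)
    (hBassoc : ∀ x y z : N, B (mul x y) z = B x (mul y z))
    (hann : ∀ x y z : N, mul (mul x y - mul y x) z = 0)
    (hnoncomm : ∃ x y : N, mul x y ≠ mul y x) :
    3 ≤ finrank K ↥(productSpan mul ⊓ B.orthogonal (productSpan mul)) := by
  obtain ⟨a, b, hab⟩ := hnoncomm
  obtain ⟨w, hw⟩ : ∃ w, B (mul a b - mul b a) w ≠ 0 := by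
    by_contra! h
    exact hab (sub_eq_zero.mp (hBsep _ h))
  have hspan : Submodule.span K (Set.range
      ![mul a b - mul b a, mul b w - mul w b, mul w a - mul a w]) ≤
      productSpan mul ⊓ B.orthogonal (productSpan mul) := by
    rw [Submodule.span_le, Set.range_subset_iff]
    intro i
    fin_cases i <;> exact commutator_mem_inf_orthogonal hBsymm hBassoc hann _ _
  calc 3 = finrank K ↥(Submodule.span K (Set.range
        ![mul a b - mul b a, mul b w - mul w b, mul w a - mul a w])) := by
        rw [finrank_span_eq_card (linearIndependent_commutators hBsymm hBassoc hw),
          Fintype.card_fin]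
    _ ≤ _ := Submodule.finrank_mono hspan

end Field

/-- Every symmetric non-commutative Novikov algebra of dimension 6
is 2-step nilpotent. -/
theorem stmt14
    {N : Type*} [AddCommGroup N] [Module ℂ N] [FiniteDimensional ℂ N]
    (mul : N →ₗ[ℂ] N →ₗ[ℂ] N)
    (hlsym : ∀ x y z : N,
      mul (mul x y) z - mul x (mul y z) = mul (mul y x) z - mul y (mul x z))
    (hrcomm : ∀ x y z : N, mul (mul x y) z = mul (mul x z) y)
    (B : N →ₗ[ℂ] N →ₗ[ℂ] ℂ)
    (hBsymm : ∀ x y : N, B x y = B y x)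
    (hBnondeg : ∀ x : N, (∀ y : N, B x y = 0) → x = 0)
    (hBassoc : ∀ x y z : N, B (mul x y) z = B x (mul y z))
    (hdim : Module.finrank ℂ N = 6)
    (hnoncomm : ∃ x y : N, mul x y ≠ mul y x) :
    ∀ x y z : N, mul (mul x y) z = 0 := by
  have hann := commutator_mul_eq_zero hlsym hrcomm hBsymm hBnondeg hBassoc
  have hnd : LinearMap.BilinForm.Nondegenerate B :=
    ⟨hBnondeg, fun y h => hBnondeg y fun x => (hBsymm y x).trans (h x)⟩
  have hrad := three_le_finrank_inf_orthogonal hBsymm hBnondeg hBassoc hann hnoncomm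
  by_contra! ⟨x, y, z, hxyz⟩
  have hP : ¬ productSpan mul ≤ orthogonal B (productSpan mul) := fun hP =>
    hxyz (mul_mul_eq_zero_of_le_orthogonal hBsymm hBnondeg hBassoc hP x y z)
  have := two_mul_finrank_inf_orthogonal_lt hnd hP
  omega
end

section
/- Let (N,B) be a symmetric Novikov algebra over ℂ. Then for all x,y,z ∈ N the commutator [x,y] = xy − yx satisfies B([x,y],z) = B(x,[y,z]) and [[x,y],z] = 0; that is, the sub-adjacent Lie algebra g(N) of N endowed with B is a quadratic 2-step nilpotent Lie algebra. -/
/-- For a symmetric Novikov algebra (N,B), the commutator satisfies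
B([x,y],z) = B(x,[y,z]) and [[x,y],z] = 0: the sub-adjacent Lie algebra g(N) with B
is a quadratic 2-step nilpotent Lie algebra. -/
theorem stmt15
    {N : Type*} [AddCommGroup N] [Module ℂ N] [FiniteDimensional ℂ N]
    (mul : N →ₗ[ℂ] N →ₗ[ℂ] N)
    (hlsym : ∀ x y z : N,
      mul (mul x y) z - mul x (mul y z) = mul (mul y x) z - mul y (mul x z))
    (hrcomm : ∀ x y z : N, mul (mul x y) z = mul (mul x z) y)
    (B : N →ₗ[ℂ] N →ₗ[ℂ] ℂ)
    (hBsymm : ∀ x y : N, B x y = B y x)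
    (hBnondeg : ∀ x : N, (∀ y : N, B x y = 0) → x = 0)
    (hBassoc : ∀ x y z : N, B (mul x y) z = B x (mul y z)) :
    ∀ x y z : N,
      (B (mul x y - mul y x) z = B x (mul y z - mul z y)) ∧
      (mul (mul x y - mul y x) z - mul z (mul x y - mul y x) = 0) := by
  -- nondegeneracy in the second argument
  have hnd2 : ∀ d : N, (∀ x : N, B x d = 0) → d = 0 := by
    intro d h
    refine hBnondeg d (fun y => ?_)
    rw [hBsymm]; exact h y
  -- left multiplications commute: y(zw) = z(yw)
  have hLcomm : ∀ y z w : N, mul y (mul z w) = mul z (mul y w) := by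
    intro y z w
    refine sub_eq_zero.mp (hnd2 _ (fun x => ?_))
    have h1 : B x (mul y (mul z w)) = B (mul (mul x y) z) w := by
      rw [hBassoc, hBassoc]
    have h2 : B x (mul z (mul y w)) = B (mul (mul x z) y) w := by
      rw [hBassoc, hBassoc]
    rw [map_sub, h1, h2, hrcomm, sub_self]
  -- commutators annihilate on the left: [x,y] z = 0
  have hleft : ∀ x y z : N, mul (mul x y - mul y x) z = 0 := by
    intro x y z
    have h := hlsym x y z
    rw [hLcomm y x z] at h
    have h' : mul (mul x y) z = mul (mul y x) z := by
      have := sub_left_inj.mp h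
      exact this
    simp [map_sub, h']
  -- commutators annihilate on the right: z [x,y] = 0
  have hright : ∀ x y z : N, mul z (mul x y - mul y x) = 0 := by
    intro x y z
    refine hnd2 _ (fun w => ?_)
    rw [hBsymm, hBassoc, hleft, map_zero]
  intro x y z
  refine ⟨?_, by rw [hleft, hright, sub_self]⟩
  have h1 : B (mul x y) z = B x (mul y z) := hBassoc x y z
  have h2 : B (mul y x) z = B x (mul z y) := by
    rw [hBsymm, ← hBassoc, hBsymm]
  simp [map_sub, h1, h2]
end

section
/- Let (N,B) be a symmetric Novikov algebra over ℂ, and write [x,y] = xy − yx and [x,y]₊ = xy + yx. Then for all x,y,z ∈ N: (1) x[y,z] = [y,z]x = 0; (2) [x,y]₊ z = [x,z]₊ y; (3) [x,yz]₊ = [xy,z]₊ = x[y,z]₊ = [x,y]₊ z; (4) x[y,z]₊ = [y,z]₊ x. -/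
/-- Identities in a symmetric Novikov algebra, where [y,z] = yz − zy and
[y,z]₊ = yz + zy:
(1) x[y,z] = [y,z]x = 0; (2) [x,y]₊z = [x,z]₊y;
(3) [x,yz]₊ = [xy,z]₊ = x[y,z]₊ = [x,y]₊z; (4) x[y,z]₊ = [y,z]₊x. -/
theorem stmt16
    {N : Type*} [AddCommGroup N] [Module ℂ N] [FiniteDimensional ℂ N]
    (mul : N →ₗ[ℂ] N →ₗ[ℂ] N)
    (hlsym : ∀ x y z : N,
      mul (mul x y) z - mul x (mul y z) = mul (mul y x) z - mul y (mul x z))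
    (hrcomm : ∀ x y z : N, mul (mul x y) z = mul (mul x z) y)
    (B : N →ₗ[ℂ] N →ₗ[ℂ] ℂ)
    (hBsymm : ∀ x y : N, B x y = B y x)
    (hBnondeg : ∀ x : N, (∀ y : N, B x y = 0) → x = 0)
    (hBassoc : ∀ x y z : N, B (mul x y) z = B x (mul y z))
    (plus : N → N → N)
    (hplus : ∀ x y : N, plus x y = mul x y + mul y x) :
    ∀ x y z : N,
      (mul x (mul y z - mul z y) = 0 ∧ mul (mul y z - mul z y) x = 0) ∧
      (mul (plus x y) z = mul (plus x z) y) ∧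
      (plus x (mul y z) = plus (mul x y) z ∧
        plus (mul x y) z = mul x (plus y z) ∧
        mul x (plus y z) = mul (plus x y) z) ∧
      (mul x (plus y z) = mul (plus y z) x) := by
  -- separation lemma from non-degeneracy
  have key : ∀ a b : N, (∀ w : N, B a w = B b w) → a = b := by
    intro a b h
    have h0 : a - b = 0 := by
      apply hBnondeg
      intro w
      rw [map_sub, LinearMap.sub_apply, h, sub_self]
    exact sub_eq_zero.mp h0
  -- L1 : left multiplications commute
  have L1 : ∀ x y z : N, mul x (mul y z) = mul y (mul x z) := by
    intro x y z
    apply key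
    intro w
    calc B (mul x (mul y z)) w = B w (mul x (mul y z)) := hBsymm _ _
      _ = B (mul w x) (mul y z) := (hBassoc w x (mul y z)).symm
      _ = B (mul (mul w x) y) z := (hBassoc (mul w x) y z).symm
      _ = B (mul (mul w y) x) z := by rw [hrcomm]
      _ = B (mul w y) (mul x z) := hBassoc _ _ _
      _ = B w (mul y (mul x z)) := hBassoc _ _ _
      _ = B (mul y (mul x z)) w := hBsymm _ _
  -- L3 : commutator in left factor vanishes
  have L3 : ∀ x y z : N, mul (mul x y) z = mul (mul y x) z := by
    intro x y z
    have h := hlsym x y z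
    rw [L1 x y z] at h
    exact sub_left_inj.mp h
  -- M : x(yz) = (zy)x
  have M : ∀ x y z : N, mul x (mul y z) = mul (mul z y) x := by
    intro x y z
    apply key
    intro w
    calc B (mul x (mul y z)) w = B w (mul x (mul y z)) := hBsymm _ _
      _ = B (mul w x) (mul y z) := (hBassoc w x (mul y z)).symm
      _ = B (mul y z) (mul w x) := hBsymm _ _
      _ = B y (mul z (mul w x)) := hBassoc _ _ _
      _ = B y (mul w (mul z x)) := by rw [L1 z w x]
      _ = B (mul y w) (mul z x) := (hBassoc y w (mul z x)).symm
      _ = B (mul z x) (mul y w) := hBsymm _ _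
      _ = B z (mul x (mul y w)) := hBassoc _ _ _
      _ = B z (mul y (mul x w)) := by rw [L1 x y w]
      _ = B (mul z y) (mul x w) := (hBassoc z y (mul x w)).symm
      _ = B (mul (mul z y) x) w := (hBassoc (mul z y) x w).symm
  -- L2 : right commutativity inside second factor
  have L2 : ∀ x y z : N, mul x (mul y z) = mul x (mul z y) := by
    intro x y z
    rw [M x y z, M x z y, L3 z y x]
  -- L4 : elements commute with products
  have L4 : ∀ x y z : N, mul x (mul y z) = mul (mul y z) x := by
    intro x y z
    rw [M x y z, L3 z y x]
  -- associativity
  have A : ∀ x y z : N, mul (mul x y) z = mul x (mul y z) := by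
    intro x y z
    calc mul (mul x y) z = mul z (mul y x) := (M z y x).symm
      _ = mul z (mul x y) := L2 z y x
      _ = mul x (mul z y) := L1 z x y
      _ = mul x (mul y z) := (L2 x y z).symm
  intro x y z
  refine ⟨⟨?_, ?_⟩, ?_, ⟨?_, ?_, ?_⟩, ?_⟩
  · rw [map_sub, L2 x y z, sub_self]
  · rw [map_sub, LinearMap.sub_apply, L3 y z x, sub_self]
  · simp only [hplus, map_add, LinearMap.add_apply]
    rw [A x y z, A y x z, A x z y, A z x y, L1 y x z, L1 z x y, L2 x z y]
  · simp only [hplus, map_add, LinearMap.add_apply]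
    rw [A x y z, ← L4 x y z, L1 z x y, ← L2 x y z]
  · simp only [hplus, map_add, LinearMap.add_apply]
    rw [A x y z, L1 z x y, ← L2 x y z]
  · simp only [hplus, map_add, LinearMap.add_apply]
    rw [L3 y x z, A x y z, ← L2 x y z]
  · simp only [hplus, map_add, LinearMap.add_apply]
    rw [L2 x z y, L4 x y z, L3 z y x]
end

section
/- Let (N,B) be a symmetric Novikov algebra over ℂ. Then the product of N is associative: (xy)z = x(yz) for all x,y,z ∈ N. -/
/-- The product of a symmetric Novikov algebra is associative. -/
theorem stmt17
    {N : Type*} [AddCommGroup N] [Module ℂ N] [FiniteDimensional ℂ N]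
    (mul : N →ₗ[ℂ] N →ₗ[ℂ] N)
    (hlsym : ∀ x y z : N,
      mul (mul x y) z - mul x (mul y z) = mul (mul y x) z - mul y (mul x z))
    (hrcomm : ∀ x y z : N, mul (mul x y) z = mul (mul x z) y)
    (B : N →ₗ[ℂ] N →ₗ[ℂ] ℂ)
    (hBsymm : ∀ x y : N, B x y = B y x)
    (hBnondeg : ∀ x : N, (∀ y : N, B x y = 0) → x = 0)
    (hBassoc : ∀ x y z : N, B (mul x y) z = B x (mul y z)) :
    ∀ x y z : N, mul (mul x y) z = mul x (mul y z) := by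
  -- Step 1: left multiplications commute
  have hLcomm : ∀ y z w : N, mul y (mul z w) = mul z (mul y w) := by
    intro y z w
    have key : ∀ x : N, B x (mul y (mul z w) - mul z (mul y w)) = 0 := by
      intro x
      have h1 : B (mul (mul x y) z) w = B x (mul y (mul z w)) := by
        rw [hBassoc, hBassoc]
      have h2 : B (mul (mul x z) y) w = B x (mul z (mul y w)) := by
        rw [hBassoc, hBassoc]
      have h3 : mul (mul x y) z = mul (mul x z) y := hrcomm x y z
      rw [map_sub, ← h1, ← h2, h3, sub_self]
    have h0 : mul y (mul z w) - mul z (mul y w) = 0 :=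
      hBnondeg _ (fun x => by rw [hBsymm]; exact key x)
    exact sub_eq_zero.mp h0
  -- Step 2: commutators act as zero on the left
  have hLzero : ∀ x y w : N, mul (mul x y - mul y x) w = 0 := by
    intro x y w
    have h := hlsym x y w
    rw [hLcomm x y w] at h
    have h3 : mul (mul x y) w = mul (mul y x) w := sub_left_inj.mp h
    simp [map_sub, LinearMap.sub_apply, h3]
  -- Step 3: products commute inside left multiplication
  have hMulcomm : ∀ x y z : N, mul x (mul y z) = mul x (mul z y) := by
    intro x y z
    have key : ∀ w : N, B (mul x (mul y z - mul z y)) w = 0 := by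
      intro w
      rw [hBassoc, hLzero y z w, map_zero]
    have h0 : mul x (mul y z - mul z y) = 0 := hBnondeg _ key
    rw [map_sub] at h0
    exact sub_eq_zero.mp h0
  -- Associator symmetries
  have hA23 : ∀ x y z : N,
      mul (mul x y) z - mul x (mul y z) = mul (mul x z) y - mul x (mul z y) := by
    intro x y z
    rw [hrcomm, hMulcomm]
  -- σ relation: B(A x y z, w) = -B(A y z w, x)
  have hsig : ∀ x y z w : N,
      B (mul (mul x y) z - mul x (mul y z)) w
        = -(B (mul (mul y z) w - mul y (mul z w)) x) := by
    intro x y z w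
    have e1 : B (mul (mul x y) z) w = B x (mul y (mul z w)) := by
      rw [hBassoc, hBassoc]
    have e2 : B (mul x (mul y z)) w = B x (mul (mul y z) w) := hBassoc x (mul y z) w
    simp only [map_sub, LinearMap.sub_apply]
    rw [e1, e2, hBsymm x (mul (mul y z) w), hBsymm x (mul y (mul z w))]
    ring
  intro x y z
  have hkey : ∀ w : N, B (mul (mul x y) z - mul x (mul y z)) w = 0 := by
    intro w
    -- T x y z w = T z w x y
    have t1 : B (mul (mul x y) z - mul x (mul y z)) w
        = B (mul (mul z w) x - mul z (mul w x)) y := by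
      rw [hsig x y z w, hsig y z w x]; ring
    -- A z w x = A w z x
    have t2 : mul (mul z w) x - mul z (mul w x) = mul (mul w z) x - mul w (mul z x) :=
      hlsym z w x
    -- σ again
    have t3 : B (mul (mul w z) x - mul w (mul z x)) y
        = -(B (mul (mul z x) y - mul z (mul x y)) w) := hsig w z x y
    -- A z x y = A x y z
    have t4 : mul (mul z x) y - mul z (mul x y) = mul (mul x y) z - mul x (mul y z) := by
      rw [hA23 z x y, hlsym z y x, hA23 y z x, hlsym y x z]
    have h : B (mul (mul x y) z - mul x (mul y z)) w
        = -(B (mul (mul x y) z - mul x (mul y z)) w) := by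
      calc B (mul (mul x y) z - mul x (mul y z)) w
          = B (mul (mul z w) x - mul z (mul w x)) y := t1
        _ = B (mul (mul w z) x - mul w (mul z x)) y := by rw [t2]
        _ = -(B (mul (mul z x) y - mul z (mul x y)) w) := t3
        _ = -(B (mul (mul x y) z - mul x (mul y z)) w) := by rw [t4]
    linear_combination h / 2
  have h0 : mul (mul x y) z - mul x (mul y z) = 0 := hBnondeg _ hkey
  exact sub_eq_zero.mp h0
end

section
/- Let (N,B) be a symmetric Novikov algebra over ℂ that is non-commutative (there exist x,y ∈ N with xy ≠ yx) and reduced, i.e. N ≠ {0} and Ann(N) ⊆ N·N, where Ann(N) = {x ∈ N : xN = Nx = 0} and N·N is the linear span of all products. Then 3 ≤ dim(Ann(N)) ≤ dim(N·N) ≤ dim(N) − 3. -/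
/-!
Associativity and symmetry of `B` together with right-commutativity make the left multiplications
commute, so left-symmetry turns every commutator `[x, y] = xy - yx` into a left annihilator, and
then, by associativity of `B`, into a two-sided one: the span `C` of the commutators lies in
`Ann(N)`. By associativity of `B`, `Ann(N)` is also the `B`-orthogonal of `N·N`, whence
`dim Ann(N) + dim N·N = dim N`.

The bracket is alternating and `B`-invariant, so its radical is `C^⊥`, of codimension `dim C`.
If `[x, y] ≠ 0`, then `x` and `y` are independent modulo `C^⊥`, so `dim C ≥ 2`; if `dim C = 2`
they span `N` modulo `C^⊥`, so every commutator is a multiple of `[x, y]` and `dim C ≤ 1`.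
Hence `3 ≤ dim C ≤ dim Ann(N)`, and `Ann(N) ⊆ N·N` with the dimension formula gives the rest.
-/

open Module

namespace LinearMap

section bilinRange

variable {R M N P : Type*} [CommSemiring R] [AddCommMonoid M] [Module R M]
  [AddCommMonoid N] [Module R N] [AddCommMonoid P] [Module R P]

def bilinRange (β : M →ₗ[R] N →ₗ[R] P) : Submodule R P :=
  Submodule.span R {a | ∃ x y, β x y = a}

lemma bilinRange_le_iff {β : M →ₗ[R] N →ₗ[R] P} {W : Submodule R P} :
    bilinRange β ≤ W ↔ ∀ x y, β x y ∈ W := by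
  rw [bilinRange, Submodule.span_le]
  exact ⟨fun h x y => h ⟨x, y, rfl⟩, by rintro h _ ⟨x, y, rfl⟩; exact h x y⟩

end bilinRange

section CommRing

variable {R V : Type*} [CommRing R] [AddCommGroup V] [Module R V]
  {B : LinearMap.BilinForm R V} {β : V →ₗ[R] V →ₗ[R] V}

lemma mem_orthogonal_bilinRange_iff_forall {x : V} :
    x ∈ B.orthogonal (bilinRange β) ↔ ∀ y z, B (β y z) x = 0 :=
  bilinRange_le_iff (W := ker (B.flip x))

lemma mem_orthogonal_bilinRange_iff' (hB : B.SeparatingRight)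
    (hinv : ∀ x y z, B (β x y) z = B x (β y z)) {x : V} :
    x ∈ B.orthogonal (bilinRange β) ↔ ∀ y, β y x = 0 := by
  simp only [mem_orthogonal_bilinRange_iff_forall, hinv]
  exact ⟨fun h z => hB _ fun y => h y z, fun h y z => by rw [h, map_zero]⟩

lemma mem_orthogonal_bilinRange_iff (hB : B.SeparatingLeft) (hBs : B.IsSymm)
    (hinv : ∀ x y z, B (β x y) z = B x (β y z)) {x : V} :
    x ∈ B.orthogonal (bilinRange β) ↔ ∀ y, β x y = 0 := by
  simp only [mem_orthogonal_bilinRange_iff_forall]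
  refine ⟨fun h y => hB _ fun z => ?_, fun h y z => ?_⟩
  · rw [hinv, ← hBs.eq, h]
  · rw [hBs.eq, ← hinv, h, map_zero, zero_apply]

lemma bilinRange_le_span_singleton_of_sup_eq_top (hβ : β.IsAlt) {W : Submodule R V}
    (hW : ∀ k ∈ W, ∀ y, β k y = 0) {x y : V} (htop : W ⊔ Submodule.span R {x, y} = ⊤) :
    bilinRange β ≤ R ∙ β x y := by
  have hpair : ∀ a ∈ ({x, y} : Set V), ∀ b ∈ ({x, y} : Set V), β a b ∈ R ∙ β x y := by
    have hyx : β y x ∈ R ∙ β x y := by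
      rw [← hβ.neg x y]
      exact Submodule.neg_mem _ (Submodule.mem_span_singleton_self _)
    rintro a (rfl | rfl) b (rfl | rfl) <;>
      simp [hβ.self_eq_zero, hyx, Submodule.mem_span_singleton_self]
  have hright : ∀ v ∈ ({x, y} : Set V), ∀ u, β u v ∈ R ∙ β x y := by
    intro v hv u
    refine (sup_le (fun k hk => ?_) (Submodule.span_le.2 fun w hw => hpair w hw v hv) :
      _ ≤ (R ∙ β x y).comap (β.flip v)) (htop ▸ Submodule.mem_top)
    simp [hW k hk]
  refine bilinRange_le_iff.2 fun u v => ?_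
  refine (sup_le (fun k hk => ?_) (Submodule.span_le.2 fun w hw => hright w hw u) :
    _ ≤ (R ∙ β x y).comap (β u)) (htop ▸ Submodule.mem_top)
  simp [← hβ.neg k, hW k hk]

end CommRing

variable {K V : Type*} [Field K] [AddCommGroup V] [Module K V]
  {B : LinearMap.BilinForm K V} {β : V →ₗ[K] V →ₗ[K] V}

lemma finrank_sup_span_pair_of_apply_ne_zero [FiniteDimensional K V] (hβ : β.IsAlt)
    {W : Submodule K V} (hW : ∀ k ∈ W, ∀ y, β k y = 0) {x y : V} (hxy : β x y ≠ 0) :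
    finrank K ↥(W ⊔ Submodule.span K {x, y}) = finrank K W + 2 := by
  have hindep : ∀ a b : K, a • x + b • y ∈ W → a = 0 ∧ b = 0 := by
    intro a b h
    have hy := hW _ h y
    have hx := hW _ h x
    simp only [map_add, map_smul, add_apply, smul_apply, hβ.self_eq_zero, ← hβ.neg x y,
      smul_zero, zero_add, add_zero, smul_neg, neg_eq_zero, smul_eq_zero] at hx hy
    exact ⟨hy.resolve_right hxy, hx.resolve_right hxy⟩
  have hpair : finrank K (Submodule.span K {x, y}) = 2 := by
    have := finrank_span_eq_card
      (LinearIndependent.pair_iff.2 fun a b h => hindep a b (h ▸ W.zero_mem))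
    rwa [Matrix.range_cons_cons_empty, Fintype.card_fin] at this
  have hdisj : W ⊓ Submodule.span K {x, y} = ⊥ := by
    rw [eq_bot_iff]
    rintro v ⟨hvW, hv⟩
    obtain ⟨a, b, rfl⟩ := Submodule.mem_span_pair.1 hv
    obtain ⟨rfl, rfl⟩ := hindep a b hvW
    simp
  have := Submodule.finrank_sup_add_finrank_inf_eq W (Submodule.span K {x, y})
  rw [hdisj, finrank_bot, hpair] at this
  omega

lemma three_le_finrank_bilinRange [FiniteDimensional K V] (hB : B.Nondegenerate)
    (hBs : B.IsSymm) (hβ : β.IsAlt) (hinv : ∀ x y z, B (β x y) z = B x (β y z))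
    (hne : β ≠ 0) : 3 ≤ finrank K (bilinRange β) := by
  set W := B.orthogonal (bilinRange β)
  have hW : ∀ k ∈ W, ∀ y, β k y = 0 := fun k hk =>
    (mem_orthogonal_bilinRange_iff hB.1 hBs hinv).1 hk
  have hdim : finrank K W + finrank K (bilinRange β) = finrank K V := by
    have := Submodule.finrank_le (bilinRange β)
    rw [BilinForm.finrank_orthogonal hB]
    omega
  obtain ⟨x, y, hxy⟩ : ∃ x y, β x y ≠ 0 := by
    by_contra! h
    exact hne (ext₂ h)
  have hsup := finrank_sup_span_pair_of_apply_ne_zero hβ hW hxy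
  have hsup_le := Submodule.finrank_le (W ⊔ Submodule.span K {x, y})
  by_contra! hlt
  have htop : W ⊔ Submodule.span K {x, y} = ⊤ := Submodule.eq_top_of_finrank_eq (by omega)
  have := Submodule.finrank_mono (bilinRange_le_span_singleton_of_sup_eq_top hβ hW htop)
  rw [finrank_span_singleton hxy] at this
  omega

end LinearMap

namespace SymmetricNovikov

open LinearMap

variable {R N : Type*} [CommRing R] [AddCommGroup N] [Module R N]
  {mul : N →ₗ[R] N →ₗ[R] N} {B : LinearMap.BilinForm R N}

lemma mul_mul_left_comm (hB : B.SeparatingRight)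
    (hrcomm : ∀ x y z, mul (mul x y) z = mul (mul x z) y)
    (hBassoc : ∀ x y z, B (mul x y) z = B x (mul y z)) (x y z : N) :
    mul x (mul y z) = mul y (mul x z) :=
  sub_eq_zero.1 <| hB _ fun u => by rw [map_sub, ← hBassoc, ← hBassoc, ← hBassoc, ← hBassoc,
    hrcomm u x y, sub_self]

lemma commutator_mul_eq_zero
    (hlsym : ∀ x y z, mul (mul x y) z - mul x (mul y z) = mul (mul y x) z - mul y (mul x z))
    (hlcomm : ∀ x y z, mul x (mul y z) = mul y (mul x z)) (x y z : N) :
    mul ((mul - mul.flip) x y) z = 0 := by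
  have := hlsym x y z
  rw [hlcomm, sub_left_inj, ← sub_eq_zero] at this
  simpa only [LinearMap.sub_apply, flip_apply, map_sub] using this

lemma mul_commutator_eq_zero (hB : B.SeparatingLeft)
    (hBassoc : ∀ x y z, B (mul x y) z = B x (mul y z))
    (hcomm : ∀ x y z, mul ((mul - mul.flip) x y) z = 0) (x y z : N) :
    mul z ((mul - mul.flip) x y) = 0 :=
  hB _ fun u => by rw [hBassoc, hcomm, map_zero]

lemma commutator_invariant (hBs : B.IsSymm) (hBassoc : ∀ x y z, B (mul x y) z = B x (mul y z))
    (x y z : N) : B ((mul - mul.flip) x y) z = B x ((mul - mul.flip) y z) := by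
  simp only [LinearMap.sub_apply, flip_apply, map_sub]
  rw [hBassoc x y z, hBassoc y x z, hBs.eq y, hBassoc x z y]

end SymmetricNovikov

open LinearMap SymmetricNovikov

theorem stmt18_general
    {N : Type*} [AddCommGroup N] [Module ℂ N] [FiniteDimensional ℂ N]
    (mul : N →ₗ[ℂ] N →ₗ[ℂ] N)
    (hlsym : ∀ x y z : N,
      mul (mul x y) z - mul x (mul y z) = mul (mul y x) z - mul y (mul x z))
    (hrcomm : ∀ x y z : N, mul (mul x y) z = mul (mul x z) y)
    (B : N →ₗ[ℂ] N →ₗ[ℂ] ℂ)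
    (hBsymm : ∀ x y : N, B x y = B y x)
    (hBnondeg : ∀ x : N, (∀ y : N, B x y = 0) → x = 0)
    (hBassoc : ∀ x y z : N, B (mul x y) z = B x (mul y z))
    (hnoncomm : ∃ x y : N, mul x y ≠ mul y x)
    (Ann : Submodule ℂ N)
    (hAnn : ∀ x : N, x ∈ Ann ↔ ∀ y : N, mul x y = 0 ∧ mul y x = 0)
    (hred : ∀ x ∈ Ann, x ∈ Submodule.span ℂ {a : N | ∃ y z : N, mul y z = a}) :
    3 ≤ Module.finrank ℂ Ann ∧
    Module.finrank ℂ Ann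
      ≤ Module.finrank ℂ (Submodule.span ℂ {a : N | ∃ y z : N, mul y z = a}) ∧
    Module.finrank ℂ (Submodule.span ℂ {a : N | ∃ y z : N, mul y z = a})
      ≤ Module.finrank ℂ N - 3 := by
  have hBs : BilinForm.IsSymm B := ⟨hBsymm⟩
  have hB : B.Nondegenerate := (IsRefl.nondegenerate_iff_separatingLeft hBs.isRefl).2 hBnondeg
  have hcomm := commutator_mul_eq_zero hlsym (mul_mul_left_comm hB.2 hrcomm hBassoc)
  have hcomm_le : bilinRange (mul - mul.flip) ≤ Ann := bilinRange_le_iff.2 fun x y =>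
    (hAnn _).2 fun z => ⟨hcomm x y z, mul_commutator_eq_zero hB.1 hBassoc hcomm x y z⟩
  have hne : mul - mul.flip ≠ 0 := fun h => by
    obtain ⟨x, y, hxy⟩ := hnoncomm
    exact hxy (sub_eq_zero.1 congr($h x y))
  have hAnn_eq : Ann = BilinForm.orthogonal B (bilinRange mul) := by
    ext x
    rw [hAnn, forall_and, ← mem_orthogonal_bilinRange_iff hB.1 hBs hBassoc,
      ← mem_orthogonal_bilinRange_iff' hB.2 hBassoc, and_self]
  have h3 : 3 ≤ finrank ℂ Ann := (three_le_finrank_bilinRange hB hBs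
    (fun x => sub_self (mul x x)) (commutator_invariant hBs hBassoc) hne).trans
    (Submodule.finrank_mono hcomm_le)
  have hdim : finrank ℂ Ann = finrank ℂ N - finrank ℂ (bilinRange mul) :=
    hAnn_eq ▸ BilinForm.finrank_orthogonal hB _
  have hAnn_le : finrank ℂ Ann ≤ finrank ℂ (bilinRange mul) := Submodule.finrank_mono hred
  refine ⟨h3, hAnn_le, ?_⟩
  show finrank ℂ (bilinRange mul) ≤ _
  omega

/-- For a reduced symmetric non-commutative Novikov algebra N,
3 ≤ dim Ann(N) ≤ dim(N·N) ≤ dim N − 3. -/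
theorem stmt18
    {N : Type*} [AddCommGroup N] [Module ℂ N] [FiniteDimensional ℂ N] [Nontrivial N]
    (mul : N →ₗ[ℂ] N →ₗ[ℂ] N)
    (hlsym : ∀ x y z : N,
      mul (mul x y) z - mul x (mul y z) = mul (mul y x) z - mul y (mul x z))
    (hrcomm : ∀ x y z : N, mul (mul x y) z = mul (mul x z) y)
    (B : N →ₗ[ℂ] N →ₗ[ℂ] ℂ)
    (hBsymm : ∀ x y : N, B x y = B y x)
    (hBnondeg : ∀ x : N, (∀ y : N, B x y = 0) → x = 0)
    (hBassoc : ∀ x y z : N, B (mul x y) z = B x (mul y z))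
    (hnoncomm : ∃ x y : N, mul x y ≠ mul y x)
    (Ann : Submodule ℂ N)
    (hAnn : ∀ x : N, x ∈ Ann ↔ ∀ y : N, mul x y = 0 ∧ mul y x = 0)
    (hred : ∀ x ∈ Ann, x ∈ Submodule.span ℂ {a : N | ∃ y z : N, mul y z = a}) :
    3 ≤ Module.finrank ℂ Ann ∧
    Module.finrank ℂ Ann
      ≤ Module.finrank ℂ (Submodule.span ℂ {a : N | ∃ y z : N, mul y z = a}) ∧
    Module.finrank ℂ (Submodule.span ℂ {a : N | ∃ y z : N, mul y z = a})
      ≤ Module.finrank ℂ N - 3 :=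
  stmt18_general mul hlsym hrcomm B hBsymm hBnondeg hBassoc hnoncomm Ann hAnn hred
end

section
/- Let (N,B) be a symmetric Novikov algebra over ℂ with dim N = 7 that is non-commutative (there exist x,y ∈ N with xy ≠ yx) and reduced, i.e. Ann(N) ⊆ N·N, where Ann(N) = {x ∈ N : xN = Nx = 0} and N·N is the linear span of all products. Then at least one of the following holds: (1) N is 3-step nilpotent, i.e. ((xy)z)t = 0 for all x,y,z,t ∈ N; or (2) there exists e ∈ N with e·e = e and B(e,e) ≠ 0 such that ℂe is an ideal of N, so that N decomposes as the B-orthogonal direct sum of ℂe and the 6-dimensional symmetric non-commutative Novikov algebra e⊥ = {x ∈ N : B(e,x) = 0}. -/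
open Module Submodule

namespace Stmt19Aux

variable {N : Type*} [AddCommGroup N] [Module ℂ N]
variable (mul : N →ₗ[ℂ] N →ₗ[ℂ] N) (B : N →ₗ[ℂ] N →ₗ[ℂ] ℂ)
variable
    (hlsym : ∀ x y z : N,
      mul (mul x y) z - mul x (mul y z) = mul (mul y x) z - mul y (mul x z))
    (hrcomm : ∀ x y z : N, mul (mul x y) z = mul (mul x z) y)
    (hBsymm : ∀ x y : N, B x y = B y x)
    (hBnondeg : ∀ x : N, (∀ y : N, B x y = 0) → x = 0)
    (hBassoc : ∀ x y z : N, B (mul x y) z = B x (mul y z))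

set_option linter.unusedSectionVars false

include hrcomm hBsymm hBnondeg hBassoc in
theorem aux_lcomm :
    ∀ x y z : N, mul x (mul y z) = mul y (mul x z) := by
  intro x y z
  have key : ∀ t : N, B t (mul x (mul y z)) = B t (mul y (mul x z)) := by
    intro t
    rw [← hBassoc t x (mul y z), ← hBassoc (mul t x) y z, hrcomm t x y,
        hBassoc (mul t y) x z, hBassoc t y (mul x z)]
  have h0 := hBnondeg (mul x (mul y z) - mul y (mul x z)) (fun t => by
    rw [map_sub, LinearMap.sub_apply, hBsymm _ t, hBsymm _ t, key t, sub_self])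
  exact sub_eq_zero.mp h0

include hlsym hrcomm hBsymm hBnondeg hBassoc in
theorem aux_commL :
    ∀ x y z : N, mul (mul x y) z = mul (mul y x) z := by
  intro x y z
  have h := hlsym x y z
  rw [aux_lcomm mul B hrcomm hBsymm hBnondeg hBassoc x y z] at h
  exact sub_left_inj.mp h

include hlsym hrcomm hBsymm hBnondeg hBassoc in
theorem aux_Bcomm2 :
    ∀ x y u v : N, B (mul x y) (mul u v) = B (mul y x) (mul u v) := by
  intro x y u v
  have hz : mul (mul x y - mul y x) u = 0 := by
    rw [map_sub, LinearMap.sub_apply,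
      aux_commL mul B hlsym hrcomm hBsymm hBnondeg hBassoc x y u, sub_self]
  have h : B (mul x y - mul y x) (mul u v) = 0 := by
    rw [← hBassoc (mul x y - mul y x) u v, hz, map_zero, LinearMap.zero_apply]
  have h2 : B (mul x y) (mul u v) - B (mul y x) (mul u v) = 0 := by
    rw [← LinearMap.sub_apply, ← map_sub]; exact h
  exact sub_eq_zero.mp h2

include hlsym hrcomm hBsymm hBnondeg hBassoc in
theorem aux_assoc :
    ∀ x y z : N, mul (mul x y) z = mul x (mul y z) := by
  intro x y z
  have lcomm := aux_lcomm mul B hrcomm hBsymm hBnondeg hBassoc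
  have bc2 := aux_Bcomm2 mul B hlsym hrcomm hBsymm hBnondeg hBassoc
  have key : ∀ t : N, B (mul (mul x y) z) t = B (mul x (mul y z)) t := by
    intro t
    calc B (mul (mul x y) z) t
        = B (mul x y) (mul z t) := hBassoc _ _ _
      _ = B x (mul y (mul z t)) := hBassoc _ _ _
      _ = B x (mul z (mul y t)) := by rw [lcomm y z t]
      _ = B (mul x z) (mul y t) := (hBassoc _ _ _).symm
      _ = B (mul y t) (mul x z) := hBsymm _ _
      _ = B y (mul t (mul x z)) := hBassoc _ _ _
      _ = B y (mul x (mul t z)) := by rw [lcomm t x z]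
      _ = B (mul y x) (mul t z) := (hBassoc _ _ _).symm
      _ = B (mul x y) (mul t z) := (bc2 x y t z).symm
      _ = B x (mul y (mul t z)) := hBassoc _ _ _
      _ = B x (mul t (mul y z)) := by rw [lcomm y t z]
      _ = B (mul x t) (mul y z) := (hBassoc _ _ _).symm
      _ = B (mul t x) (mul y z) := bc2 x t y z
      _ = B t (mul x (mul y z)) := hBassoc _ _ _
      _ = B (mul x (mul y z)) t := (hBsymm _ _).symm
  have h0 := hBnondeg (mul (mul x y) z - mul x (mul y z)) (fun t => by
    rw [map_sub, LinearMap.sub_apply, key t, sub_self])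
  exact sub_eq_zero.mp h0

include hlsym hrcomm hBsymm hBnondeg hBassoc in
theorem aux_commprod :
    ∀ x u v : N, mul x (mul u v) = mul (mul u v) x := by
  intro x u v
  calc mul x (mul u v)
      = mul (mul x u) v := (aux_assoc mul B hlsym hrcomm hBsymm hBnondeg hBassoc x u v).symm
    _ = mul (mul u x) v := aux_commL mul B hlsym hrcomm hBsymm hBnondeg hBassoc x u v
    _ = mul (mul u v) x := hrcomm u x v

include hlsym hrcomm hBsymm hBnondeg hBassoc in
theorem aux_commSpan (s : Set N) (hs : ∀ a ∈ s, ∃ u v, mul u v = a) :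
    ∀ x, ∀ m ∈ span ℂ s, mul x m = mul m x := by
  intro x m hm
  induction hm using span_induction with
  | mem a ha =>
      obtain ⟨u, v, rfl⟩ := hs a ha
      exact aux_commprod mul B hlsym hrcomm hBsymm hBnondeg hBassoc x u v
  | zero => simp
  | add a b _ _ iha ihb => simp only [map_add, LinearMap.add_apply, iha, ihb]
  | smul c a _ ih => simp only [map_smul, LinearMap.smul_apply, ih]

include hlsym hrcomm hBsymm hBnondeg hBassoc in
theorem aux_BcommSpan (s : Set N) (hs : ∀ a ∈ s, ∃ u v, mul u v = a) :
    ∀ x y, ∀ m ∈ span ℂ s, B (mul x y - mul y x) m = 0 := by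
  intro x y m hm
  induction hm using span_induction with
  | mem a ha =>
      obtain ⟨u, v, rfl⟩ := hs a ha
      have hz : mul (mul x y - mul y x) u = 0 := by
        rw [map_sub, LinearMap.sub_apply,
          aux_commL mul B hlsym hrcomm hBsymm hBnondeg hBassoc x y u, sub_self]
      rw [← hBassoc (mul x y - mul y x) u v, hz, map_zero, LinearMap.zero_apply]
  | zero => simp
  | add a b _ _ iha ihb => rw [map_add, iha, ihb, add_zero]
  | smul c a _ ih => rw [map_smul, ih, smul_zero]

include hBsymm hBassoc in
theorem aux_psi31 :
    ∀ x y : N, B (mul x y - mul y x) x = 0 := by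
  intro x y
  rw [map_sub, LinearMap.sub_apply, hBassoc x y x, hBsymm x (mul y x), sub_self]

include hBsymm hBassoc in
theorem aux_psi32 :
    ∀ x y : N, B (mul x y - mul y x) y = 0 := by
  intro x y
  rw [map_sub, LinearMap.sub_apply, hBassoc y x y, hBsymm y (mul x y), sub_self]

include hBsymm hBassoc in
theorem aux_psi_cyc :
    ∀ x y z : N, B (mul x y - mul y x) z = B (mul y z - mul z y) x := by
  intro x y z
  have h1 : B (mul y z) x = B (mul x y) z := by rw [hBsymm, ← hBassoc]
  have h2 : B (mul z y) x = B (mul y x) z := by rw [hBassoc, hBsymm]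
  simp only [map_sub, LinearMap.sub_apply, h1, h2]


variable [FiniteDimensional ℂ N]

set_option maxHeartbeats 2000000 in
include hlsym hrcomm hBsymm hBnondeg hBassoc in
theorem aux_dim6
    (S : Submodule ℂ N)
    (hcl : ∀ x ∈ S, ∀ y ∈ S, mul x y ∈ S)
    (hndS : ∀ x ∈ S, (∀ y ∈ S, B x y = 0) → x = 0)
    (hncS : ∃ x ∈ S, ∃ y ∈ S, mul x y ≠ mul y x)
    (hrdS : ∀ x ∈ S, (∀ y ∈ S, mul x y = 0 ∧ mul y x = 0) →
        x ∈ span ℂ {a : N | ∃ u ∈ S, ∃ v ∈ S, mul u v = a}) :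
    6 ≤ finrank ℂ S := by
  set sset : Set N := {a : N | ∃ u ∈ S, ∃ v ∈ S, mul u v = a} with hsset
  set MS : Submodule ℂ N := span ℂ sset with hMS
  have hsMS : ∀ a ∈ sset, ∃ u v, mul u v = a := by
    rintro a ⟨u, hu, v, hv, rfl⟩; exact ⟨u, v, rfl⟩
  have hMSle : MS ≤ S := span_le.mpr (by rintro a ⟨u, hu, v, hv, rfl⟩; exact hcl u hu v hv)
  have psi3 : ∀ x y : N, ∀ m ∈ MS, B (mul x y - mul y x) m = 0 :=
    fun x y => aux_BcommSpan mul B hlsym hrcomm hBsymm hBnondeg hBassoc sset hsMS x y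
  -- noncommutative witnesses
  obtain ⟨a, haS, b, hbS, hab⟩ := hncS
  have hDS : mul a b - mul b a ∈ S := sub_mem (hcl a haS b hbS) (hcl b hbS a haS)
  have hex : ∃ c ∈ S, B (mul a b - mul b a) c ≠ 0 := by
    by_contra h
    push_neg at h
    exact hab (sub_eq_zero.mp (hndS _ hDS h))
  obtain ⟨c, hcS, habc⟩ := hex
  -- linear independence mod MS
  set MS' : Submodule ℂ S := MS.comap S.subtype with hMS'
  set va : S := ⟨a, haS⟩
  set vb : S := ⟨b, hbS⟩
  set vc : S := ⟨c, hcS⟩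
  have hli : LinearIndependent ℂ
      ![Submodule.Quotient.mk (p := MS') va, Submodule.Quotient.mk (p := MS') vb,
        Submodule.Quotient.mk (p := MS') vc] := by
    rw [Fintype.linearIndependent_iff]
    intro g hg
    have hmk : Submodule.Quotient.mk (p := MS') (g 0 • va + g 1 • vb + g 2 • vc) = 0 := by
      simpa [Fin.sum_univ_three, Submodule.Quotient.mk_add, Submodule.Quotient.mk_smul] using hg
    have hmem : (g 0 • va + g 1 • vb + g 2 • vc) ∈ MS' := (Submodule.Quotient.mk_eq_zero _).mp hmk
    have hmemN : (g 0 • a + g 1 • b + g 2 • c) ∈ MS := by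
      simpa [hMS', Submodule.mem_comap] using hmem
    have expand : ∀ x y : N, B (mul x y - mul y x) (g 0 • a + g 1 • b + g 2 • c)
        = g 0 * B (mul x y - mul y x) a + g 1 * B (mul x y - mul y x) b
          + g 2 * B (mul x y - mul y x) c := by
      intro x y; simp [map_add, map_smul]
    have e2 : g 2 = 0 := by
      have h0 := psi3 a b _ hmemN
      rw [expand, aux_psi31 mul B hBsymm hBassoc a b, aux_psi32 mul B hBsymm hBassoc a b, mul_zero, mul_zero,
        zero_add, zero_add] at h0
      rcases mul_eq_zero.mp h0 with h | h
      · exact h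
      · exact absurd h habc
    have e0 : g 0 = 0 := by
      have h0 := psi3 b c _ hmemN
      rw [expand, aux_psi31 mul B hBsymm hBassoc b c, aux_psi32 mul B hBsymm hBassoc b c,
        ← aux_psi_cyc mul B hBsymm hBassoc a b c, mul_zero, mul_zero, add_zero, add_zero] at h0
      rcases mul_eq_zero.mp h0 with h | h
      · exact h
      · exact absurd h habc
    have e1 : g 1 = 0 := by
      have h0 := psi3 c a _ hmemN
      rw [expand, aux_psi32 mul B hBsymm hBassoc c a, aux_psi31 mul B hBsymm hBassoc c a,
        ← aux_psi_cyc mul B hBsymm hBassoc b c a, ← aux_psi_cyc mul B hBsymm hBassoc a b c,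
        mul_zero, mul_zero, zero_add, add_zero] at h0
      rcases mul_eq_zero.mp h0 with h | h
      · exact h
      · exact absurd h habc
    intro i
    fin_cases i
    · exact e0
    · exact e1
    · exact e2
  -- rank counting
  have h3 : 3 ≤ finrank ℂ (S ⧸ MS') := by
    simpa using hli.fintype_card_le_finrank
  have hquot : finrank ℂ (S ⧸ MS') + finrank ℂ MS' = finrank ℂ S :=
    MS'.finrank_quotient_add_finrank
  have hMSrank : finrank ℂ MS' = finrank ℂ MS :=
    (Submodule.comapSubtypeEquivOfLe hMSle).finrank_eq
  -- the orthogonal-to-products map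
  set gd : S →ₗ[ℂ] (Module.Dual ℂ MS) := (B.compl₂ MS.subtype).comp S.subtype with hgd
  have hrn : finrank ℂ (LinearMap.range gd) + finrank ℂ (LinearMap.ker gd) = finrank ℂ S :=
    LinearMap.finrank_range_add_finrank_ker gd
  have hrange : finrank ℂ (LinearMap.range gd) ≤ finrank ℂ MS := by
    calc finrank ℂ (LinearMap.range gd) ≤ finrank ℂ (Module.Dual ℂ MS) :=
          Submodule.finrank_le _
      _ = finrank ℂ MS := Subspace.dual_finrank_eq
  have hker : ∀ x : S, gd x = 0 → (x : N) ∈ MS := by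
    intro x hx
    have hxB : ∀ m ∈ MS, B (x : N) m = 0 := by
      intro m hm
      have h1 : gd x ⟨m, hm⟩ = 0 := by rw [hx]; rfl
      simpa [hgd] using h1
    have hxy : ∀ y ∈ S, mul (x : N) y = 0 := by
      intro y hy
      refine hndS _ (hcl _ x.2 _ hy) (fun t ht => ?_)
      rw [hBassoc]
      exact hxB _ (subset_span ⟨y, hy, t, ht, rfl⟩)
    have hyx : ∀ y ∈ S, mul y (x : N) = 0 := by
      intro y hy
      refine hndS _ (hcl _ hy _ x.2) (fun t ht => ?_)
      rw [hBassoc y (x : N) t, hxy t ht, map_zero]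
    exact hrdS _ x.2 (fun y hy => ⟨hxy y hy, hyx y hy⟩)
  have hkerle : finrank ℂ (LinearMap.ker gd) ≤ finrank ℂ MS := by
    let j : LinearMap.ker gd →ₗ[ℂ] MS :=
      { toFun := fun x => ⟨((x : S) : N), hker _ x.2⟩
        map_add' := fun x y => rfl
        map_smul' := fun c x => rfl }
    have hj : Function.Injective j := by
      intro x y h
      have h2 : ((x : S) : N) = ((y : S) : N) := (Subtype.mk_eq_mk.mp h) -- fix below
      exact Subtype.ext (Subtype.ext h2)
    exact LinearMap.finrank_le_finrank_of_injective hj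
  omega

set_option maxHeartbeats 2000000 in
theorem stmt19_inner
    (hlsym : ∀ x y z : N,
      mul (mul x y) z - mul x (mul y z) = mul (mul y x) z - mul y (mul x z))
    (hrcomm : ∀ x y z : N, mul (mul x y) z = mul (mul x z) y)
    (hBsymm : ∀ x y : N, B x y = B y x)
    (hBnondeg : ∀ x : N, (∀ y : N, B x y = 0) → x = 0)
    (hBassoc : ∀ x y z : N, B (mul x y) z = B x (mul y z))
    (hdim : Module.finrank ℂ N = 7)
    (hnoncomm : ∃ x y : N, mul x y ≠ mul y x)
    (hred : ∀ x : N, (∀ y : N, mul x y = 0 ∧ mul y x = 0) →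
      x ∈ Submodule.span ℂ {a : N | ∃ y z : N, mul y z = a}) :
    (∀ x y z t : N, mul (mul (mul x y) z) t = 0) ∨
    (∃ e : N, mul e e = e ∧ B e e ≠ 0 ∧
      (∀ x : N, ∃ c : ℂ, mul x e = c • e) ∧
      (∀ x : N, ∃ c : ℂ, mul e x = c • e) ∧
      IsCompl (Submodule.span ℂ {e}) (LinearMap.ker (B e)) ∧
      Module.finrank ℂ (LinearMap.ker (B e)) = 6 ∧
      (∀ x ∈ LinearMap.ker (B e), ∀ y ∈ LinearMap.ker (B e),
        mul x y ∈ LinearMap.ker (B e)) ∧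
      (∀ x ∈ LinearMap.ker (B e),
        (∀ y ∈ LinearMap.ker (B e), B x y = 0) → x = 0) ∧
      (∃ x ∈ LinearMap.ker (B e), ∃ y ∈ LinearMap.ker (B e),
        mul x y ≠ mul y x)) := by
  have lcomm := aux_lcomm mul B hrcomm hBsymm hBnondeg hBassoc
  have assoc := aux_assoc mul B hlsym hrcomm hBsymm hBnondeg hBassoc
  have commprod := aux_commprod mul B hlsym hrcomm hBsymm hBnondeg hBassoc
  have mulL : ∀ p q r : N, mul (p + q) r = mul p r + mul q r := fun p q r => by
    rw [map_add, LinearMap.add_apply]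
  have mulLs : ∀ (cc : ℂ) (p r : N), mul (cc • p) r = cc • mul p r := fun cc p r => by
    rw [map_smul, LinearMap.smul_apply]
  set pset : Set N := {a : N | ∃ y z : N, mul y z = a} with hpset
  set M : Submodule ℂ N := span ℂ pset with hM
  have hsP : ∀ a ∈ pset, ∃ u v, mul u v = a := fun a ha => ha
  have hprod_mem : ∀ x y : N, mul x y ∈ M := fun x y => subset_span ⟨x, y, rfl⟩
  have BcommM : ∀ x y : N, ∀ m ∈ M, B (mul x y - mul y x) m = 0 :=
    fun x y => aux_BcommSpan mul B hlsym hrcomm hBsymm hBnondeg hBassoc pset hsP x y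
  -- the kernel T of the map to Dual M
  set gd : N →ₗ[ℂ] (Module.Dual ℂ M) := B.compl₂ M.subtype with hgd
  set T : Submodule ℂ N := LinearMap.ker gd with hT
  have hTmem : ∀ x : N, x ∈ T ↔ ∀ m ∈ M, B x m = 0 := by
    intro x
    constructor
    · intro hx m hm
      have h1 : gd x ⟨m, hm⟩ = 0 := by rw [LinearMap.mem_ker.mp hx]; rfl
      simpa [hgd] using h1
    · intro h
      apply LinearMap.mem_ker.mpr
      apply LinearMap.ext
      rintro ⟨m, hm⟩
      simpa [hgd] using h m hm
  have hTann : ∀ x ∈ T, ∀ y : N, mul x y = 0 ∧ mul y x = 0 := by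
    intro x hx
    have h1 : ∀ y, mul x y = 0 := by
      intro y
      refine hBnondeg _ (fun t => ?_)
      rw [hBassoc]
      exact (hTmem x).mp hx _ (hprod_mem y t)
    intro y
    refine ⟨h1 y, hBnondeg _ (fun t => ?_)⟩
    rw [hBassoc y x t, h1 t, map_zero]
  have hTM : T ≤ M := fun x hx => hred x (hTann x hx)
  -- independence of a,b,c mod M
  obtain ⟨a, b, hab⟩ := hnoncomm
  have hex : ∃ c : N, B (mul a b - mul b a) c ≠ 0 := by
    by_contra h
    push_neg at h
    exact hab (sub_eq_zero.mp (hBnondeg _ h))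
  obtain ⟨c, habc⟩ := hex
  have hli : LinearIndependent ℂ
      ![Submodule.Quotient.mk (p := M) a, Submodule.Quotient.mk (p := M) b,
        Submodule.Quotient.mk (p := M) c] := by
    rw [Fintype.linearIndependent_iff]
    intro g hg
    have hmk : Submodule.Quotient.mk (p := M) (g 0 • a + g 1 • b + g 2 • c) = 0 := by
      simpa [Fin.sum_univ_three, Submodule.Quotient.mk_add, Submodule.Quotient.mk_smul] using hg
    have hmemN : (g 0 • a + g 1 • b + g 2 • c) ∈ M := (Submodule.Quotient.mk_eq_zero _).mp hmk
    have expand : ∀ x y : N, B (mul x y - mul y x) (g 0 • a + g 1 • b + g 2 • c)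
        = g 0 * B (mul x y - mul y x) a + g 1 * B (mul x y - mul y x) b
          + g 2 * B (mul x y - mul y x) c := by
      intro x y; simp [map_add, map_smul]
    have e2 : g 2 = 0 := by
      have h0 := BcommM a b _ hmemN
      rw [expand, aux_psi31 mul B hBsymm hBassoc a b, aux_psi32 mul B hBsymm hBassoc a b, mul_zero, mul_zero,
        zero_add, zero_add] at h0
      rcases mul_eq_zero.mp h0 with h | h
      · exact h
      · exact absurd h habc
    have e0 : g 0 = 0 := by
      have h0 := BcommM b c _ hmemN
      rw [expand, aux_psi31 mul B hBsymm hBassoc b c, aux_psi32 mul B hBsymm hBassoc b c,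
        ← aux_psi_cyc mul B hBsymm hBassoc a b c, mul_zero, mul_zero, add_zero, add_zero] at h0
      rcases mul_eq_zero.mp h0 with h | h
      · exact h
      · exact absurd h habc
    have e1 : g 1 = 0 := by
      have h0 := BcommM c a _ hmemN
      rw [expand, aux_psi32 mul B hBsymm hBassoc c a, aux_psi31 mul B hBsymm hBassoc c a,
        ← aux_psi_cyc mul B hBsymm hBassoc b c a, ← aux_psi_cyc mul B hBsymm hBassoc a b c,
        mul_zero, mul_zero, zero_add, add_zero] at h0
      rcases mul_eq_zero.mp h0 with h | h
      · exact h
      · exact absurd h habc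
    intro i
    fin_cases i
    · exact e0
    · exact e1
    · exact e2
  have h3 : 3 ≤ finrank ℂ (N ⧸ M) := by
    simpa using hli.fintype_card_le_finrank
  have hquot : finrank ℂ (N ⧸ M) + finrank ℂ M = 7 := by
    rw [← hdim]; exact M.finrank_quotient_add_finrank
  have hrn : finrank ℂ (LinearMap.range gd) + finrank ℂ T = 7 := by
    rw [← hdim]; exact LinearMap.finrank_range_add_finrank_ker gd
  have hrange : finrank ℂ (LinearMap.range gd) ≤ finrank ℂ M := by
    calc finrank ℂ (LinearMap.range gd) ≤ finrank ℂ (Module.Dual ℂ M) :=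
          Submodule.finrank_le _
      _ = finrank ℂ M := Subspace.dual_finrank_eq
  by_cases hMT : M ≤ T
  · -- all products annihilate: 3-step nilpotent (even 2-step)
    left
    intro x y z t
    have h2 : mul (mul x y) z = 0 := (hTann _ (hMT (hprod_mem x y)) z).1
    rw [h2, LinearMap.map_zero₂]
  -- T < M, get w
  have hTltM : T < M := lt_of_le_of_ne hTM (fun h => hMT (le_of_eq h.symm))
  have hfTM : finrank ℂ T < finrank ℂ M := Submodule.finrank_lt_finrank_of_lt hTltM
  have hfT : finrank ℂ T = 3 := by omega
  have hfM : finrank ℂ M = 4 := by omega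
  obtain ⟨w, hwM, hwT⟩ := SetLike.exists_of_lt hTltM
  have hw0 : w ≠ 0 := fun h => hwT (h ▸ T.zero_mem)
  have hsup : T ⊔ span ℂ {w} = M := by
    have hle : T ⊔ span ℂ {w} ≤ M :=
      sup_le hTM ((Submodule.span_singleton_le_iff_mem w M).mpr hwM)
    have hinf : T ⊓ span ℂ {w} = ⊥ := by
      rw [eq_bot_iff]
      rintro x ⟨hxT, hxw⟩
      obtain ⟨cc, rfl⟩ := Submodule.mem_span_singleton.mp hxw
      rcases eq_or_ne cc 0 with h | h
      · simp [h]
      · have hmem : (cc⁻¹ * cc) • w ∈ T := by rw [mul_smul]; exact T.smul_mem _ hxT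
        rw [inv_mul_cancel₀ h, one_smul] at hmem
        exact absurd hmem hwT
    have hsupr := Submodule.finrank_sup_add_finrank_inf_eq T (span ℂ {w})
    rw [hinf, finrank_bot, add_zero, finrank_span_singleton hw0, hfT] at hsupr
    exact Submodule.eq_of_le_of_finrank_le hle (by omega)
  have hdecomp : ∀ m ∈ M, ∃ t ∈ T, ∃ cc : ℂ, m = t + cc • w := by
    intro m hm
    rw [← hsup] at hm
    obtain ⟨t, ht, s, hs, rfl⟩ := Submodule.mem_sup.mp hm
    obtain ⟨cc, rfl⟩ := Submodule.mem_span_singleton.mp hs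
    exact ⟨t, ht, cc, rfl⟩
  by_cases hwz : ∀ z, mul w z ∈ T
  · -- branch 1 again
    left
    intro x y z t
    obtain ⟨t', ht', cc, hxy⟩ := hdecomp (mul x y) (hprod_mem x y)
    have hstep : mul (mul x y) z = cc • mul w z := by
      rw [hxy, map_add, LinearMap.add_apply, (hTann t' ht' z).1, map_smul,
        LinearMap.smul_apply, zero_add]
    rw [hstep, map_smul, LinearMap.smul_apply, (hTann _ (hwz z) t).1, smul_zero]
  -- now construct the idempotent
  push_neg at hwz
  obtain ⟨z0, hz0⟩ := hwz
  obtain ⟨a0, ha0, c0, hwz0⟩ := hdecomp (mul w z0) (hprod_mem w z0)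
  have hc0 : c0 ≠ 0 := by
    intro h
    exact hz0 (by rw [hwz0, h, zero_smul, add_zero]; exact ha0)
  obtain ⟨z, hzdef⟩ : ∃ z : N, z = c0⁻¹ • z0 := ⟨_, rfl⟩
  obtain ⟨aT, haTdef⟩ : ∃ aT : N, aT = c0⁻¹ • a0 := ⟨_, rfl⟩
  have haTT : aT ∈ T := by rw [haTdef]; exact T.smul_mem _ ha0
  have hwz1 : mul w z = aT + w := by
    rw [hzdef, map_smul, hwz0, smul_add, smul_smul, inv_mul_cancel₀ hc0, one_smul, haTdef]
  obtain ⟨t1, ht1, c1, hww⟩ := hdecomp (mul w w) (hprod_mem w w)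
  obtain ⟨cm, hcmdef⟩ : ∃ cm : N, cm = mul w z - mul z w := ⟨_, rfl⟩
  have hcmT : cm ∈ T := by
    rw [hcmdef, hTmem]
    intro m hm
    exact BcommM w z m hm
  have hzw : mul z w = (aT - cm) + w := by rw [hcmdef, hwz1]; abel
  by_cases hc1 : c1 = 0
  · -- impossible: leads to a contradiction
    exfalso
    rw [hc1, zero_smul, add_zero] at hww
    obtain ⟨t2, ht2, s, hzz⟩ := hdecomp (mul z z) (hprod_mem z z)
    obtain ⟨u, hudef⟩ : ∃ u : N, u = z + ((1-s)/2) • w := ⟨_, rfl⟩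
    obtain ⟨aU, haUdef⟩ : ∃ aU : N, aU = aT + ((1-s)/2) • t1 := ⟨_, rfl⟩
    have haUT : aU ∈ T := by rw [haUdef]; exact T.add_mem haTT (T.smul_mem _ ht1)
    obtain ⟨bU, hbUdef⟩ : ∃ bU : N,
        bU = t2 + ((1-s)/2) • (aT - cm) + ((1-s)/2) • aT + (((1-s)/2)*((1-s)/2)) • t1 :=
      ⟨_, rfl⟩
    have hbUT : bU ∈ T := by
      rw [hbUdef]
      exact T.add_mem (T.add_mem (T.add_mem ht2 (T.smul_mem _ (T.sub_mem haTT hcmT)))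
        (T.smul_mem _ haTT)) (T.smul_mem _ ht1)
    have hwu : mul w u = aU + w := by
      rw [hudef, map_add, map_smul, hwz1, hww, haUdef]
      abel
    have huu : mul u u = bU + w := by
      rw [hudef]
      simp only [map_add, map_smul, LinearMap.add_apply, LinearMap.smul_apply]
      rw [hzz, hzw, hwz1, hww, hbUdef]
      module
    have hP1 : mul (mul u u) (mul u u) = t1 := by
      rw [huu, mulL, map_add, map_add, (hTann bU hbUT bU).1, (hTann bU hbUT w).1,
        (hTann bU hbUT w).2, hww]
      simp
    have hP2 : mul (mul u u) (mul u u) = aU + w := by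
      have h1 : mul (mul u u) (mul u u) = mul (mul (mul u u) u) u :=
        (assoc (mul u u) u u).symm
      have h2 : mul (mul u u) u = aU + w := by
        rw [huu, mulL, (hTann bU hbUT u).1, zero_add, hwu]
      rw [h1, h2, mulL, (hTann aU haUT u).1, zero_add, hwu]
    have hEq : aU + w = t1 := hP2.symm.trans hP1
    have hwVal : w = t1 - aU := by rw [← hEq]; abel
    exact hwT (by rw [hwVal]; exact T.sub_mem ht1 haUT)
  · -- idempotent exists
    obtain ⟨e, hedef⟩ : ∃ e : N, e = mul (c1⁻¹ • w) (c1⁻¹ • w) := ⟨_, rfl⟩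
    have heM : e ∈ M := by rw [hedef]; exact hprod_mem _ _
    have hsm : (c1⁻¹ * c1⁻¹) • (t1 + c1 • w) = (c1⁻¹ * c1⁻¹) • t1 + c1⁻¹ • w := by
      rw [smul_add, smul_smul]
      congr 2
      field_simp
    have he2 : e = (c1⁻¹ * c1⁻¹) • t1 + c1⁻¹ • w := by
      rw [hedef, mulLs, map_smul, hww, smul_smul, hsm]
    have htA : (c1⁻¹ * c1⁻¹) • t1 ∈ T := T.smul_mem _ ht1
    have hee : mul e e = e := by
      have h1 : mul e e = (c1⁻¹ * c1⁻¹) • mul w w := by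
        calc mul e e
            = mul ((c1⁻¹ * c1⁻¹) • t1 + c1⁻¹ • w) ((c1⁻¹ * c1⁻¹) • t1 + c1⁻¹ • w) := by
              rw [← he2]
          _ = (c1⁻¹ * c1⁻¹) • mul w w := by
              have h_a2 : mul (c1⁻¹ • w) ((c1⁻¹ * c1⁻¹) • t1) = 0 := by
                rw [mulLs, (hTann _ htA _).2, smul_zero]
              have h_a3 : mul (c1⁻¹ • w) (c1⁻¹ • w) = (c1⁻¹ * c1⁻¹) • mul w w := by
                rw [mulLs, map_smul, smul_smul]
              rw [mulL, (hTann _ htA _).1, map_add, h_a2, h_a3, zero_add, zero_add]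
      rw [h1, hww, hsm]
      exact he2.symm
    have he0 : e ≠ 0 := by
      intro h
      apply hwT
      have hwv : w = c1 • ((0:N) - (c1⁻¹ * c1⁻¹) • t1) := by
        rw [← h, he2]
        rw [smul_sub, smul_add, smul_smul, smul_smul]
        rw [show c1 * c1⁻¹ = 1 by field_simp, one_smul]
        abel
      rw [hwv]
      exact T.smul_mem _ (T.sub_mem T.zero_mem htA)

    -- Peirce decomposition for the idempotent e
    right
    -- e commutes with everything
    have ecomm : ∀ x : N, mul e x = mul x e := by
      intro x
      have hexe : mul (mul e x) e = mul e x := by rw [hrcomm e x e, hee]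
      have key : ∀ t : N, B (mul e x) t = B (mul x e) t := by
        intro t
        have h1 : B (mul e x) t = B e (mul x t) := by
          calc B (mul e x) t = B (mul (mul e x) e) t := by rw [hexe]
            _ = B (mul e x) (mul e t) := hBassoc _ e t
            _ = B e (mul x (mul e t)) := hBassoc _ _ _
            _ = B e (mul e (mul x t)) := by rw [lcomm x e t]
            _ = B (mul e e) (mul x t) := (hBassoc _ _ _).symm
            _ = B e (mul x t) := by rw [hee]
        have h2 : B (mul x e) t = B e (mul t x) := by
          calc B (mul x e) t = B x (mul e t) := hBassoc _ _ _
            _ = B (mul e t) x := hBsymm _ _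
            _ = B e (mul t x) := hBassoc _ _ _
        have h3 : B e (mul x t) - B e (mul t x) = 0 := by
          have h4 : B (mul x t - mul t x) e = 0 := BcommM x t e heM
          rw [map_sub, LinearMap.sub_apply, hBsymm _ e, hBsymm _ e] at h4
          exact h4
        rw [h1, h2]
        exact sub_eq_zero.mp h3
      have h0 := hBnondeg (mul e x - mul x e) (fun t => by
        rw [map_sub, LinearMap.sub_apply, key t, sub_self])
      exact sub_eq_zero.mp h0
    have eproj : ∀ x : N, mul e (mul e x) = mul e x := by
      intro x
      rw [← assoc e e x, hee]
    have hsubN0 : ∀ x : N, x - mul e x ∈ LinearMap.ker (mul e) := by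
      intro x
      rw [LinearMap.mem_ker, map_sub, eproj, sub_self]
    have hcl0 : ∀ x ∈ LinearMap.ker (mul e), ∀ y ∈ LinearMap.ker (mul e),
        mul x y ∈ LinearMap.ker (mul e) := by
      intro x hx y hy
      rw [LinearMap.mem_ker] at hy ⊢
      rw [lcomm e x y, hy, map_zero]
    have hBe0 : ∀ x ∈ LinearMap.ker (mul e), B e x = 0 := by
      intro x hx
      rw [LinearMap.mem_ker] at hx
      calc B e x = B (mul e e) x := by rw [hee]
        _ = B e (mul e x) := hBassoc _ _ _
        _ = 0 := by rw [hx, map_zero]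
    have hprod_e_right : ∀ p : N, ∀ y ∈ LinearMap.ker (mul e), mul (mul e p) y = 0 := by
      intro p y hy
      rw [hrcomm e p y, LinearMap.mem_ker.mp hy, LinearMap.map_zero₂]
    have hN0_e : ∀ y ∈ LinearMap.ker (mul e), ∀ p : N, mul y (mul e p) = 0 := by
      intro y hy p
      rw [commprod y e p]
      exact hprod_e_right p y hy
    have hnd0 : ∀ x ∈ LinearMap.ker (mul e),
        (∀ y ∈ LinearMap.ker (mul e), B x y = 0) → x = 0 := by
      intro x hx h
      apply hBnondeg x
      intro y
      have h1 : B x (mul e y) = 0 := by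
        rw [← hBassoc x e y, ← ecomm x, LinearMap.mem_ker.mp hx, LinearMap.map_zero₂]
      have h2 : B x (y - mul e y) = 0 := h _ (hsubN0 y)
      calc B x y = B x (mul e y + (y - mul e y)) := by rw [add_sub_cancel]
        _ = B x (mul e y) + B x (y - mul e y) := map_add _ _ _
        _ = 0 := by rw [h1, h2, add_zero]
    have hnc0 : ∃ x ∈ LinearMap.ker (mul e), ∃ y ∈ LinearMap.ker (mul e),
        mul x y ≠ mul y x := by
      refine ⟨a - mul e a, hsubN0 a, b - mul e b, hsubN0 b, ?_⟩
      have hkey : mul (a - mul e a) (b - mul e b) - mul (b - mul e b) (a - mul e a)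
          = mul a b - mul b a := by
        have c1' : mul a (mul e b) = mul (mul e b) a := commprod a e b
        have c2' : mul b (mul e a) = mul (mul e a) b := commprod b e a
        have c3' : mul (mul e a) (mul e b) = mul (mul e b) (mul e a) := commprod (mul e a) e b
        simp only [map_sub, LinearMap.sub_apply]
        rw [c1', c2', c3']
        abel
      intro h
      apply hab
      have h5 : mul a b - mul b a = 0 := by rw [← hkey, h, sub_self]
      exact sub_eq_zero.mp h5
    -- reduced property of the kernel subalgebra
    have hMM0 : ∀ m ∈ M, m - mul e m ∈
        span ℂ {a : N | ∃ u ∈ LinearMap.ker (mul e), ∃ v ∈ LinearMap.ker (mul e), mul u v = a} := by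
      intro m hm
      induction hm using span_induction with
      | mem p hp =>
          obtain ⟨u, v, rfl⟩ := hp
          have hgoal : mul u v - mul e (mul u v) = mul (u - mul e u) (v - mul e v) := by
            have h1 : mul u (mul e v) = mul e (mul u v) := lcomm u e v
            have h2 : mul (mul e u) (mul e v) = mul (mul e u) v := by
              rw [← assoc (mul e u) e v, hrcomm e u e, hee]
            have h3 : mul (mul e u) v = mul e (mul u v) := assoc e u v
            simp only [map_sub, LinearMap.sub_apply]
            rw [h1, h2, h3]
            abel
          rw [hgoal]
          exact subset_span ⟨_, hsubN0 u, _, hsubN0 v, rfl⟩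
      | zero => simp
      | add x y hx hy ihx ihy =>
          have hxy : (x + y) - mul e (x + y) = (x - mul e x) + (y - mul e y) := by
            rw [map_add]; abel
          rw [hxy]
          exact Submodule.add_mem _ ihx ihy
      | smul cc x hx ih =>
          have hxs : (cc • x) - mul e (cc • x) = cc • (x - mul e x) := by
            rw [map_smul, smul_sub]
          rw [hxs]
          exact Submodule.smul_mem _ _ ih
    have hrd0 : ∀ x ∈ LinearMap.ker (mul e),
        (∀ y ∈ LinearMap.ker (mul e), mul x y = 0 ∧ mul y x = 0) →
        x ∈ span ℂ {a : N | ∃ u ∈ LinearMap.ker (mul e), ∃ v ∈ LinearMap.ker (mul e), mul u v = a} := by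
      intro x hx h
      have hxann : ∀ y : N, mul x y = 0 ∧ mul y x = 0 := by
        intro y
        constructor
        · have hsplit : mul x y = mul x (mul e y) + mul x (y - mul e y) := by
            rw [← map_add, add_sub_cancel]
          rw [hsplit, (h _ (hsubN0 y)).1, add_zero, commprod x e y, hrcomm e y x,
            LinearMap.mem_ker.mp hx, LinearMap.map_zero₂]
        · have hsplit : mul y x = mul (mul e y) x + mul (y - mul e y) x := by
            rw [← mulL, add_sub_cancel]
          rw [hsplit, (h _ (hsubN0 y)).2, add_zero, hprod_e_right y x hx]
      have hxM : x ∈ M := hred x hxann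
      have hfin := hMM0 x hxM
      rwa [LinearMap.mem_ker.mp hx, sub_zero] at hfin
    -- dimension of the kernel subalgebra
    have hdim60 : 6 ≤ finrank ℂ (LinearMap.ker (mul e)) :=
      aux_dim6 mul B hlsym hrcomm hBsymm hBnondeg hBassoc (LinearMap.ker (mul e)) hcl0 hnd0 hnc0 hrd0
    have hrne : finrank ℂ (LinearMap.range (mul e)) + finrank ℂ (LinearMap.ker (mul e)) = 7 := by
      rw [← hdim]; exact LinearMap.finrank_range_add_finrank_ker (mul e)
    have hspanle : span ℂ {e} ≤ LinearMap.range (mul e) :=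
      (Submodule.span_singleton_le_iff_mem e _).mpr ⟨e, hee⟩
    have hsr : span ℂ {e} = LinearMap.range (mul e) := by
      apply Submodule.eq_of_le_of_finrank_le hspanle
      rw [finrank_span_singleton he0]
      omega
    have hrange_mem : ∀ x : N, ∃ cc : ℂ, mul e x = cc • e := by
      intro x
      have hm : mul e x ∈ span ℂ {e} := by rw [hsr]; exact ⟨x, rfl⟩
      obtain ⟨cc, hcc⟩ := Submodule.mem_span_singleton.mp hm
      exact ⟨cc, hcc.symm⟩
    have hBee : B e e ≠ 0 := by
      intro hB0
      apply he0
      apply hBnondeg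
      intro y
      obtain ⟨cc, hcc⟩ := hrange_mem y
      calc B e y = B e (mul e y + (y - mul e y)) := by rw [add_sub_cancel]
        _ = B e (mul e y) + B e (y - mul e y) := map_add _ _ _
        _ = 0 := by
            rw [hBe0 _ (hsubN0 y), hcc, map_smul, smul_eq_mul, hB0, mul_zero, add_zero]
    have hkerBe : LinearMap.ker (B e) = LinearMap.ker (mul e) := by
      ext x
      simp only [LinearMap.mem_ker]
      constructor
      · intro hBex
        obtain ⟨cc, hcc⟩ := hrange_mem x
        have h1 : B e x = cc * B e e := by
          calc B e x = B e (mul e x + (x - mul e x)) := by rw [add_sub_cancel]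
            _ = B e (mul e x) + B e (x - mul e x) := map_add _ _ _
            _ = cc * B e e := by
                rw [hBe0 _ (hsubN0 x), hcc, map_smul, smul_eq_mul, add_zero]
        have hcc0 : cc = 0 := by
          rw [hBex] at h1
          exact (mul_eq_zero.mp h1.symm).resolve_right hBee
        rw [hcc, hcc0, zero_smul]
      · intro hx
        exact hBe0 x (LinearMap.mem_ker.mpr hx)
    -- final assembly
    refine ⟨e, hee, hBee, ?_, ?_, ?_, ?_, ?_, ?_, ?_⟩
    · intro x
      obtain ⟨cc, hcc⟩ := hrange_mem x
      exact ⟨cc, by rw [← ecomm x]; exact hcc⟩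
    · exact hrange_mem
    · rw [hkerBe]
      constructor
      · rw [Submodule.disjoint_def]
        intro x hxe hx0
        obtain ⟨cc, hcce⟩ := Submodule.mem_span_singleton.mp hxe
        have h1 : mul e x = x := by rw [← hcce, map_smul, hee]
        rw [LinearMap.mem_ker.mp hx0] at h1
        exact h1.symm
      · rw [codisjoint_iff, eq_top_iff]
        intro x _
        have hx1 : mul e x ∈ span ℂ {e} := by rw [hsr]; exact ⟨x, rfl⟩
        exact Submodule.mem_sup.mpr ⟨mul e x, hx1, x - mul e x, hsubN0 x, by abel⟩
    · rw [hkerBe]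
      rw [← hsr, finrank_span_singleton he0] at hrne
      omega
    · rw [hkerBe]
      exact hcl0
    · rw [hkerBe]
      exact hnd0
    · rw [hkerBe]
      exact hnc0

end Stmt19Aux

/-- A reduced symmetric non-commutative Novikov algebra of dimension 7 is
either 3-step nilpotent, or decomposes as the B-orthogonal direct sum of ℂe (with
e·e = e, B(e,e) ≠ 0, ℂe an ideal) and the 6-dimensional symmetric non-commutative
Novikov algebra e⊥. -/
theorem stmt19
    {N : Type*} [AddCommGroup N] [Module ℂ N] [FiniteDimensional ℂ N]
    (mul : N →ₗ[ℂ] N →ₗ[ℂ] N)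
    (hlsym : ∀ x y z : N,
      mul (mul x y) z - mul x (mul y z) = mul (mul y x) z - mul y (mul x z))
    (hrcomm : ∀ x y z : N, mul (mul x y) z = mul (mul x z) y)
    (B : N →ₗ[ℂ] N →ₗ[ℂ] ℂ)
    (hBsymm : ∀ x y : N, B x y = B y x)
    (hBnondeg : ∀ x : N, (∀ y : N, B x y = 0) → x = 0)
    (hBassoc : ∀ x y z : N, B (mul x y) z = B x (mul y z))
    (hdim : Module.finrank ℂ N = 7)
    (hnoncomm : ∃ x y : N, mul x y ≠ mul y x)
    (hred : ∀ x : N, (∀ y : N, mul x y = 0 ∧ mul y x = 0) →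
      x ∈ Submodule.span ℂ {a : N | ∃ y z : N, mul y z = a}) :
    (∀ x y z t : N, mul (mul (mul x y) z) t = 0) ∨
    (∃ e : N, mul e e = e ∧ B e e ≠ 0 ∧
      (∀ x : N, ∃ c : ℂ, mul x e = c • e) ∧
      (∀ x : N, ∃ c : ℂ, mul e x = c • e) ∧
      IsCompl (Submodule.span ℂ {e}) (LinearMap.ker (B e)) ∧
      Module.finrank ℂ (LinearMap.ker (B e)) = 6 ∧
      (∀ x ∈ LinearMap.ker (B e), ∀ y ∈ LinearMap.ker (B e),
        mul x y ∈ LinearMap.ker (B e)) ∧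
      (∀ x ∈ LinearMap.ker (B e),
        (∀ y ∈ LinearMap.ker (B e), B x y = 0) → x = 0) ∧
      (∃ x ∈ LinearMap.ker (B e), ∃ y ∈ LinearMap.ker (B e),
        mul x y ≠ mul y x)) := by
  exact Stmt19Aux.stmt19_inner mul B hlsym hrcomm hBsymm hBnondeg hBassoc hdim hnoncomm hred
end
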